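/- arXiv:1204.5958 — 10 statements merged into one kernel-verified Lean document; each statement's English description precedes it below -/
import Mathlib

section
/- Every M×N matrix Φ with unit-norm columns has worst-case coherence μ ≥ sqrt((N-M)/(M(N-1))), with equality if and only if Φ is an equiangular tight frame. -/
set_option maxHeartbeats 1000000

open Finset

private lemma welch_var {M : ℕ} (hM : 0 < M) (a : Fin M → ℝ) (s : ℝ)
    (hs : ∑ m, a m = s) :
    ∑ m, (a m - s / M) ^ 2 = (∑ m, (a m) ^ 2) - s ^ 2 / M := by
  have hM' : (M : ℝ) ≠ 0 := Nat.cast_ne_zero.mpr hM.ne'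
  have h1 : ∑ m : Fin M, (a m - s / M) ^ 2
      = ∑ m : Fin M, ((a m) ^ 2 - 2 * (s / M) * a m + (s / M) ^ 2) :=
    Finset.sum_congr rfl fun m _ => by ring
  rw [h1, Finset.sum_add_distrib, Finset.sum_sub_distrib, ← Finset.mul_sum, hs,
    Finset.sum_const, Finset.card_univ, Fintype.card_fin, nsmul_eq_mul]
  field_simp
  ring

private lemma welch_frob {M N : ℕ} (Φ : Matrix (Fin M) (Fin N) ℂ) :
    ∑ n : Fin N, ∑ n' : Fin N,
      (∑ m : Fin M, (starRingEnd ℂ) (Φ m n) * Φ m n') *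
        (starRingEnd ℂ) (∑ m : Fin M, (starRingEnd ℂ) (Φ m n) * Φ m n')
    = ∑ m : Fin M, ∑ m' : Fin M,
      (∑ n : Fin N, Φ m n * (starRingEnd ℂ) (Φ m' n)) *
        (starRingEnd ℂ) (∑ n : Fin N, Φ m n * (starRingEnd ℂ) (Φ m' n)) := by
  simp only [map_sum, map_mul, Complex.conj_conj, Finset.sum_mul, Finset.mul_sum]
  conv_rhs => enter [2, m, 2, m']; rw [Finset.sum_comm]
  conv_rhs => enter [2, m]; rw [Finset.sum_comm]
  conv_rhs => rw [Finset.sum_comm]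
  conv_rhs => enter [2, n, 2, m]; rw [Finset.sum_comm]
  conv_rhs => enter [2, n]; rw [Finset.sum_comm]
  refine Finset.sum_congr rfl fun n _ => Finset.sum_congr rfl fun n' _ =>
    Finset.sum_congr rfl fun a _ => Finset.sum_congr rfl fun b _ => by ring

/-- Welch bound. Every `M × N` matrix `Φ` with unit-norm columns has
worst-case coherence `μ ≥ √((N-M)/(M(N-1)))`, with equality iff `Φ` is an
equiangular tight frame (orthogonal equal-norm rows, unit-norm columns,
equal-modulus inner products between distinct columns). -/
theorem stmt_0 (M N : ℕ) (hM : 0 < M) (hMN : M ≤ N) (hN : 2 ≤ N)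
    (Φ : Matrix (Fin M) (Fin N) ℂ)
    (hunit : ∀ n : Fin N, ∑ m : Fin M, ‖Φ m n‖ ^ 2 = 1)
    (μ : ℝ)
    (hμ : IsGreatest {t : ℝ | ∃ n n' : Fin N, n ≠ n' ∧
        t = ‖∑ m : Fin M, (starRingEnd ℂ) (Φ m n) * Φ m n'‖} μ) :
    Real.sqrt (((N : ℝ) - M) / (M * ((N : ℝ) - 1))) ≤ μ ∧
      (μ = Real.sqrt (((N : ℝ) - M) / (M * ((N : ℝ) - 1))) ↔
        ((∀ m m' : Fin M, m ≠ m' →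
            ∑ n : Fin N, Φ m n * (starRingEnd ℂ) (Φ m' n) = 0) ∧
         (∀ m m' : Fin M,
            ∑ n : Fin N, ‖Φ m n‖ ^ 2 = ∑ n : Fin N, ‖Φ m' n‖ ^ 2) ∧
         (∃ c : ℝ, ∀ n n' : Fin N, n ≠ n' →
            ‖∑ m : Fin M, (starRingEnd ℂ) (Φ m n) * Φ m n'‖ = c))) := by
  classical
  -- notation
  set G : Fin N → Fin N → ℂ := fun n n' => ∑ m : Fin M, (starRingEnd ℂ) (Φ m n) * Φ m n'
    with hGdef
  set A : Fin M → Fin M → ℂ := fun m m' => ∑ n : Fin N, Φ m n * (starRingEnd ℂ) (Φ m' n)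
    with hAdef
  set a : Fin M → ℝ := fun m => ∑ n : Fin N, ‖Φ m n‖ ^ 2 with hadef
  have hMr : (0 : ℝ) < M := by exact_mod_cast hM
  have hNr2 : (2 : ℝ) ≤ N := by exact_mod_cast hN
  have hMNr : (M : ℝ) ≤ N := by exact_mod_cast hMN
  have hN1 : (0 : ℝ) < (N : ℝ) - 1 := by linarith
  have hNr : (0 : ℝ) < N := by linarith
  set t : ℝ := ((N : ℝ) - M) / (M * ((N : ℝ) - 1)) with htdef
  have ht0 : 0 ≤ t := by
    apply div_nonneg (by linarith) (by positivity)
  -- μ ≥ 0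
  obtain ⟨n₀, n₁, hn01, hμeq⟩ := hμ.1
  have hμ0 : 0 ≤ μ := hμeq ▸ norm_nonneg _
  -- each off-diagonal |G| ≤ μ
  have hGle : ∀ n n' : Fin N, n ≠ n' → ‖G n n'‖ ≤ μ :=
    fun n n' h => hμ.2 ⟨n, n', h, rfl⟩
  -- sum of a = N
  have ha_sum : ∑ m, a m = (N : ℝ) := by
    rw [hadef]
    rw [Finset.sum_comm]
    simp [hunit]
  -- diagonal values
  have habs : ∀ z : ℂ, (z * (starRingEnd ℂ) z).re = ‖z‖ ^ 2 := fun z => by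
    rw [Complex.mul_conj]
    simp [Complex.sq_norm]
  have hAdiag : ∀ m, (A m m : ℂ) = ((a m : ℝ) : ℂ) := by
    intro m
    rw [hAdef, hadef]
    push_cast
    refine Finset.sum_congr rfl fun n _ => ?_
    rw [Complex.mul_conj, Complex.normSq_eq_norm_sq]
    push_cast
    ring
  have ha_nonneg : ∀ m, 0 ≤ a m := fun m =>
    Finset.sum_nonneg fun n _ => by positivity
  have hAdiag_abs : ∀ m, ‖A m m‖ ^ 2 = (a m) ^ 2 := by
    intro m
    rw [hAdiag m, Complex.norm_real, Real.norm_eq_abs, abs_of_nonneg (ha_nonneg m)]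
  have hGdiag : ∀ n, ‖G n n‖ ^ 2 = 1 := by
    intro n
    have : G n n = 1 := by
      rw [hGdef]
      have : ∀ m : Fin M, (starRingEnd ℂ) (Φ m n) * Φ m n
          = ((‖Φ m n‖ ^ 2 : ℝ) : ℂ) := fun m => by
        rw [mul_comm, Complex.mul_conj, Complex.normSq_eq_norm_sq]
      simp only [this]
      rw [← Complex.ofReal_sum, hunit n]
      norm_num
    rw [this]; simp
  -- Frobenius identity in real form
  have hS : ∑ n, ∑ n', ‖G n n'‖ ^ 2
      = ∑ m, ∑ m', ‖A m m'‖ ^ 2 := by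
    have h1 : ∑ n, ∑ n', ‖G n n'‖ ^ 2
        = (∑ n, ∑ n', G n n' * (starRingEnd ℂ) (G n n')).re := by
      rw [Complex.re_sum]
      refine Finset.sum_congr rfl fun n _ => ?_
      rw [Complex.re_sum]
      exact Finset.sum_congr rfl fun n' _ => (habs _).symm
    have h2 : ∑ m, ∑ m', ‖A m m'‖ ^ 2
        = (∑ m, ∑ m', A m m' * (starRingEnd ℂ) (A m m')).re := by
      rw [Complex.re_sum]
      refine Finset.sum_congr rfl fun m _ => ?_
      rw [Complex.re_sum]
      exact Finset.sum_congr rfl fun m' _ => (habs _).symm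
    rw [h1, h2, hGdef, hAdef]
    exact congrArg Complex.re (welch_frob Φ)
  -- splits
  set Soff : ℝ := ∑ n, ∑ n' ∈ Finset.univ.erase n, ‖G n n'‖ ^ 2 with hSoffdef
  set offA : ℝ := ∑ m, ∑ m' ∈ Finset.univ.erase m, ‖A m m'‖ ^ 2 with hoffAdef
  have hsplitG : ∑ n, ∑ n', ‖G n n'‖ ^ 2 = (N : ℝ) + Soff := by
    rw [hSoffdef]
    rw [show (∑ n, ∑ n', ‖G n n'‖ ^ 2)
        = ∑ n : Fin N, (‖G n n‖ ^ 2
            + ∑ n' ∈ Finset.univ.erase n, ‖G n n'‖ ^ 2) from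
      Finset.sum_congr rfl fun n _ =>
        (Finset.add_sum_erase _ _ (Finset.mem_univ n)).symm]
    rw [Finset.sum_add_distrib]
    simp [hGdiag]
  have hsplitA : ∑ m, ∑ m', ‖A m m'‖ ^ 2 = (∑ m, (a m) ^ 2) + offA := by
    rw [hoffAdef]
    rw [show (∑ m, ∑ m', ‖A m m'‖ ^ 2)
        = ∑ m : Fin M, (‖A m m‖ ^ 2
            + ∑ m' ∈ Finset.univ.erase m, ‖A m m'‖ ^ 2) from
      Finset.sum_congr rfl fun m _ =>
        (Finset.add_sum_erase _ _ (Finset.mem_univ m)).symm]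
    rw [Finset.sum_add_distrib]
    congr 1
    exact Finset.sum_congr rfl fun m _ => hAdiag_abs m
  have hoffA_nonneg : 0 ≤ offA :=
    Finset.sum_nonneg fun m _ => Finset.sum_nonneg fun m' _ => by positivity
  have hSoff_le : Soff ≤ (N : ℝ) * ((N : ℝ) - 1) * μ ^ 2 := by
    have hbound : ∀ n : Fin N, ∑ n' ∈ Finset.univ.erase n, ‖G n n'‖ ^ 2
        ≤ ((N : ℝ) - 1) * μ ^ 2 := by
      intro n
      calc ∑ n' ∈ Finset.univ.erase n, ‖G n n'‖ ^ 2
          ≤ ∑ _n' ∈ Finset.univ.erase n, μ ^ 2 := by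
            refine Finset.sum_le_sum fun n' hn' => ?_
            have hne : n ≠ n' := (Finset.ne_of_mem_erase hn').symm
            exact pow_le_pow_left₀ (norm_nonneg _) (hGle n n' hne) 2
        _ = ((N : ℝ) - 1) * μ ^ 2 := by
            rw [Finset.sum_const, Finset.card_erase_of_mem (Finset.mem_univ n),
              Finset.card_univ, Fintype.card_fin, nsmul_eq_mul]
            have : ((N - 1 : ℕ) : ℝ) = (N : ℝ) - 1 := by
              have : 1 ≤ N := le_trans one_le_two hN
              push_cast [this]; ring
            rw [this]
    calc Soff ≤ ∑ _n : Fin N, ((N : ℝ) - 1) * μ ^ 2 :=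
          Finset.sum_le_sum fun n _ => hbound n
      _ = (N : ℝ) * ((N : ℝ) - 1) * μ ^ 2 := by
          rw [Finset.sum_const, Finset.card_univ, Fintype.card_fin, nsmul_eq_mul]; ring
  have hvar := welch_var hM a (N : ℝ) ha_sum
  have hvar_nonneg : 0 ≤ ∑ m, (a m - (N : ℝ) / M) ^ 2 :=
    Finset.sum_nonneg fun m _ => by positivity
  have hdiag_ge : (N : ℝ) ^ 2 / M ≤ ∑ m, (a m) ^ 2 := by linarith
  -- the key equation S = N + Soff = ∑ a² + offA
  have hkey : (N : ℝ) + Soff = (∑ m, (a m) ^ 2) + offA := by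
    rw [← hsplitG, ← hsplitA, hS]
  -- arithmetic fact: N²/M - N = N(N-1)t
  have harith : (N : ℝ) ^ 2 / M - N = (N : ℝ) * ((N : ℝ) - 1) * t := by
    rw [htdef]
    field_simp
  have hNN1 : (0 : ℝ) < (N : ℝ) * ((N : ℝ) - 1) := by positivity
  -- main inequality : t ≤ μ²
  have hmain : t ≤ μ ^ 2 := by
    have h1 : (N : ℝ) ^ 2 / M ≤ (N : ℝ) + (N : ℝ) * ((N : ℝ) - 1) * μ ^ 2 := by
      linarith
    have h2 : (N : ℝ) * ((N : ℝ) - 1) * t ≤ (N : ℝ) * ((N : ℝ) - 1) * μ ^ 2 := by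
      linarith
    exact le_of_mul_le_mul_left (by linarith [h2]) hNN1
  have hsqrt_le : Real.sqrt t ≤ μ := by
    calc Real.sqrt t ≤ Real.sqrt (μ ^ 2) := Real.sqrt_le_sqrt hmain
      _ = μ := Real.sqrt_sq hμ0
  refine ⟨hsqrt_le, ?_, ?_⟩
  · -- equality → ETF
    intro heq
    have hμsq : μ ^ 2 = t := by
      rw [heq, Real.sq_sqrt ht0]
    -- all inequalities are equalities
    have hSoff_eq : Soff = (N : ℝ) * ((N : ℝ) - 1) * μ ^ 2 ∧
        (∑ m, (a m) ^ 2) = (N : ℝ) ^ 2 / M ∧ offA = 0 := by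
      have h1 : (N : ℝ) + (N : ℝ) * ((N : ℝ) - 1) * μ ^ 2 = (N : ℝ) ^ 2 / M := by
        rw [hμsq]; linarith
      constructor
      · linarith
      constructor
      · linarith
      · linarith
    obtain ⟨hSoffeq, hsumeq, hoffAeq⟩ := hSoff_eq
    refine ⟨?_, ?_, ⟨μ, ?_⟩⟩
    · -- rows orthogonal
      intro m m' hmm'
      have hzero : ∀ p ∈ (Finset.univ : Finset (Fin M)),
          ∀ q ∈ Finset.univ.erase p, ‖A p q‖ ^ 2 = 0 := by
        intro p hp q hq
        have h2 : ∑ q ∈ Finset.univ.erase p, ‖A p q‖ ^ 2 = 0 := by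
          have := (Finset.sum_eq_zero_iff_of_nonneg
            (fun p _ => Finset.sum_nonneg fun q _ => by positivity)).mp hoffAeq p hp
          exact this
        exact (Finset.sum_eq_zero_iff_of_nonneg (fun q _ => by positivity)).mp h2 q hq
      have hmem : m' ∈ Finset.univ.erase m := Finset.mem_erase.mpr ⟨hmm'.symm, Finset.mem_univ _⟩
      have := hzero m (Finset.mem_univ m) m' hmem
      have habs0 : ‖A m m'‖ = 0 := by
        nlinarith [norm_nonneg (A m m')]
      exact norm_eq_zero.mp habs0
    · -- rows equal norm
      have hall : ∀ m, a m = (N : ℝ) / M := by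
        have h0 : ∑ m, (a m - (N : ℝ) / M) ^ 2 = 0 := by
          rw [hvar, hsumeq]; ring
        intro m
        have := (Finset.sum_eq_zero_iff_of_nonneg (fun m _ => by positivity)).mp h0 m
          (Finset.mem_univ m)
        have h1 : a m - (N : ℝ) / M = 0 := by nlinarith
        linarith
      intro m m'
      show a m = a m'
      rw [hall m, hall m']
    · -- equiangular with c = μ
      intro n n' hnn'
      have h0 : ∑ n, ∑ n' ∈ Finset.univ.erase n, (μ ^ 2 - ‖G n n'‖ ^ 2) = 0 := by
        have hexp : ∑ n, ∑ n' ∈ Finset.univ.erase n, (μ ^ 2 - ‖G n n'‖ ^ 2)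
            = (N : ℝ) * ((N : ℝ) - 1) * μ ^ 2 - Soff := by
          rw [hSoffdef]
          rw [show (∑ n : Fin N, ∑ n' ∈ Finset.univ.erase n,
              (μ ^ 2 - ‖G n n'‖ ^ 2))
            = ∑ n : Fin N, (((N : ℝ) - 1) * μ ^ 2
                - ∑ n' ∈ Finset.univ.erase n, ‖G n n'‖ ^ 2) from
            Finset.sum_congr rfl fun n _ => by
              rw [Finset.sum_sub_distrib, Finset.sum_const,
                Finset.card_erase_of_mem (Finset.mem_univ n), Finset.card_univ,
                Fintype.card_fin, nsmul_eq_mul]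
              have h1N : 1 ≤ N := le_trans one_le_two hN
              have : ((N - 1 : ℕ) : ℝ) = (N : ℝ) - 1 := by push_cast [h1N]; ring
              rw [this]]
          rw [Finset.sum_sub_distrib, Finset.sum_const, Finset.card_univ,
            Fintype.card_fin, nsmul_eq_mul]
          ring
        rw [hexp, hSoffeq]; ring
      have hterm : ∀ p ∈ (Finset.univ : Finset (Fin N)), ∀ q ∈ Finset.univ.erase p,
          μ ^ 2 - ‖G p q‖ ^ 2 = 0 := by
        intro p hp q hq
        have h2 := (Finset.sum_eq_zero_iff_of_nonneg (fun p _ =>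
          Finset.sum_nonneg fun q hq => by
            have hne : p ≠ q := (Finset.ne_of_mem_erase hq).symm
            have := hGle p q hne
            nlinarith [norm_nonneg (G p q)])).mp h0 p hp
        refine (Finset.sum_eq_zero_iff_of_nonneg (fun q hq => ?_)).mp h2 q hq
        have hne : p ≠ q := (Finset.ne_of_mem_erase hq).symm
        have := hGle p q hne
        nlinarith [norm_nonneg (G p q)]
      have hmem : n' ∈ Finset.univ.erase n := Finset.mem_erase.mpr ⟨hnn'.symm, Finset.mem_univ _⟩
      have h3 := hterm n (Finset.mem_univ n) n' hmem
      have h4 : ‖G n n'‖ ^ 2 = μ ^ 2 := by linarith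
      nlinarith [norm_nonneg (G n n'), hμ0]
  · -- ETF → equality
    rintro ⟨h1, h2, c, h3⟩
    -- μ = c
    have hμc : μ = c := by rw [hμeq]; exact h3 n₀ n₁ hn01
    -- a m = N / M
    have hall : ∀ m, a m = (N : ℝ) / M := by
      intro m
      have hsum2 : ∑ m' : Fin M, a m' = (M : ℝ) * a m := by
        rw [show (∑ m' : Fin M, a m') = ∑ _m' : Fin M, a m from
          Finset.sum_congr rfl fun m' _ => (h2 m' m)]
        rw [Finset.sum_const, Finset.card_univ, Fintype.card_fin, nsmul_eq_mul]
      have : (M : ℝ) * a m = N := by rw [← hsum2, ha_sum]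
      field_simp
      linarith
    have hsumsq : ∑ m, (a m) ^ 2 = (N : ℝ) ^ 2 / M := by
      rw [show (∑ m, (a m) ^ 2) = ∑ _m : Fin M, ((N : ℝ) / M) ^ 2 from
        Finset.sum_congr rfl fun m _ => by rw [hall m]]
      rw [Finset.sum_const, Finset.card_univ, Fintype.card_fin, nsmul_eq_mul]
      field_simp
    have hoffA0 : offA = 0 := by
      rw [hoffAdef]
      refine Finset.sum_eq_zero fun m _ => Finset.sum_eq_zero fun m' hm' => ?_
      have hne : m ≠ m' := (Finset.ne_of_mem_erase hm').symm
      rw [show A m m' = 0 from h1 m m' hne]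
      simp
    have hSoffc : Soff = (N : ℝ) * ((N : ℝ) - 1) * c ^ 2 := by
      rw [hSoffdef]
      rw [show (∑ n : Fin N, ∑ n' ∈ Finset.univ.erase n, ‖G n n'‖ ^ 2)
          = ∑ n : Fin N, (((N : ℝ) - 1) * c ^ 2) from
        Finset.sum_congr rfl fun n _ => by
          rw [show (∑ n' ∈ Finset.univ.erase n, ‖G n n'‖ ^ 2)
              = ∑ _n' ∈ Finset.univ.erase n, c ^ 2 from
            Finset.sum_congr rfl fun n' hn' => by
              rw [h3 n n' (Finset.ne_of_mem_erase hn').symm]]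
          rw [Finset.sum_const, Finset.card_erase_of_mem (Finset.mem_univ n),
            Finset.card_univ, Fintype.card_fin, nsmul_eq_mul]
          have h1N : 1 ≤ N := le_trans one_le_two hN
          have : ((N - 1 : ℕ) : ℝ) = (N : ℝ) - 1 := by push_cast [h1N]; ring
          rw [this]]
      rw [Finset.sum_const, Finset.card_univ, Fintype.card_fin, nsmul_eq_mul]
      ring
    have hc2 : c ^ 2 = t := by
      have heq1 : (N : ℝ) + (N : ℝ) * ((N : ℝ) - 1) * c ^ 2 = (N : ℝ) ^ 2 / M := by
        rw [← hSoffc]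
        rw [hkey, hsumsq, hoffA0]
        ring
      have h2' : (N : ℝ) * ((N : ℝ) - 1) * c ^ 2 = (N : ℝ) * ((N : ℝ) - 1) * t := by
        linarith
      exact mul_left_cancel₀ hNN1.ne' h2'
    have hμsq : μ ^ 2 = t := by rw [hμc, hc2]
    rw [← hμsq, Real.sqrt_sq hμ0]
end

section
/- A Vandermonde matrix with M rows and N ≥ M columns is full spark (every M×M submatrix is invertible) if and only if its bases α_1,...,α_N are distinct. -/
/-- A Vandermonde matrix `V[m,n] = (α n)^m` with `M` rows and `N ≥ M`
columns is full spark (every `M × M` submatrix is invertible) if and only if its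
bases `α 1, …, α N` are distinct. -/
theorem stmt_4 (M N : ℕ) (hM : 2 ≤ M) (hMN : M ≤ N) (α : Fin N → ℂ) :
    (∀ f : Fin M → Fin N, Function.Injective f →
        (Matrix.of fun m n : Fin M => α (f n) ^ (m : ℕ)).det ≠ 0) ↔
      Function.Injective α := by
  constructor
  · intro h i j hij
    by_contra hne
    have h0 : (0 : ℕ) < M := by omega
    have h1 : (1 : ℕ) < M := by omega
    set a : Fin N := Fin.castLE hMN ⟨0, h0⟩ with ha
    set b : Fin N := Fin.castLE hMN ⟨1, h1⟩ with hb
    have hab : a ≠ b := by simp [ha, hb, Fin.ext_iff]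
    let τ : Equiv.Perm (Fin N) := Equiv.swap a i
    have hi : i ≠ τ b := by
      have : τ a = i := Equiv.swap_apply_left a i
      intro hc; exact hab (τ.injective (this.trans hc))
    let σ : Equiv.Perm (Fin N) := τ.trans (Equiv.swap (τ b) j)
    have hσa : σ a = i := by
      simp only [σ, Equiv.trans_apply]
      rw [Equiv.swap_apply_left]
      exact Equiv.swap_apply_of_ne_of_ne hi hne
    have hσb : σ b = j := by
      simp only [σ, Equiv.trans_apply, Equiv.swap_apply_left]
    refine h (fun k => σ (Fin.castLE hMN k))
      (fun x y hxy => (Fin.castLE_injective hMN) (σ.injective hxy)) ?_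
    apply Matrix.det_zero_of_column_eq (i := (⟨0, h0⟩ : Fin M)) (j := ⟨1, h1⟩)
    · simp [Fin.ext_iff]
    · intro m
      simp only [Matrix.of_apply]
      rw [show σ (Fin.castLE hMN ⟨0, h0⟩) = i from hσa,
          show σ (Fin.castLE hMN ⟨1, h1⟩) = j from hσb, hij]
  · intro hα f hf
    have : (Matrix.of fun m n : Fin M => α (f n) ^ (m : ℕ)) =
        (Matrix.vandermonde (α ∘ f)).transpose := by
      ext m n; simp [Matrix.vandermonde, Matrix.transpose]
    rw [this, Matrix.det_transpose]
    exact Matrix.det_vandermonde_ne_zero_iff.mpr (hα.comp hf)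
end

section
/- Let N ≥ M and suppose the M×N matrix Φ formed by selecting the rows of the N×N discrete Fourier transform matrix indexed by a set ℳ ⊆ ℤ_N is full spark. Then the matrix formed by the rows indexed by the complement ℳᶜ is also full spark. -/
/-- The `N × N` discrete Fourier transform matrix, `ω^{mn}` with `ω = e^{-2πi/N}`. -/
noncomputable def dftMatrix (N : ℕ) [NeZero N] : Matrix (ZMod N) (ZMod N) ℂ :=
  Matrix.of fun m n : ZMod N =>
    Complex.exp (-(2 * Real.pi * Complex.I) * ((m.val : ℂ) * (n.val : ℂ)) / N)

/-- The row-submatrix of the DFT with rows indexed by `S` is full spark: every square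
submatrix obtained by choosing `|S|` distinct columns is invertible. -/
def DFTFullSparkRows (N : ℕ) [NeZero N] (S : Finset (ZMod N)) : Prop :=
  ∀ g : {m : ZMod N // m ∈ S} → ZMod N, Function.Injective g →
    (Matrix.of fun i j : {m : ZMod N // m ∈ S} =>
      dftMatrix N (i : ZMod N) (g j)).det ≠ 0

/-- The inverse DFT matrix. -/
noncomputable def idftMatrix (N : ℕ) [NeZero N] : Matrix (ZMod N) (ZMod N) ℂ :=
  Matrix.of fun m n : ZMod N =>
    Complex.exp ((2 * Real.pi * Complex.I) * ((m.val : ℂ) * (n.val : ℂ)) / N) / N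

lemma sum_pow_val (N : ℕ) [NeZero N] (ζ : ℂ) :
    ∑ k : ZMod N, ζ ^ (ZMod.val k) = ∑ j ∈ Finset.range N, ζ ^ j := by
  refine Finset.sum_nbij' (fun k => k.val) (fun j => (j : ZMod N)) ?_ ?_ ?_ ?_ ?_
  · intro k _; exact Finset.mem_range.mpr (ZMod.val_lt k)
  · intro j _; exact Finset.mem_univ _
  · intro k _; exact ZMod.natCast_zmod_val k
  · intro j hj; exact ZMod.val_cast_of_lt (Finset.mem_range.mp hj)
  · intro k _; rfl

lemma idft_mul_dft (N : ℕ) [NeZero N] : idftMatrix N * dftMatrix N = 1 := by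
  ext n m
  simp only [Matrix.mul_apply, idftMatrix, dftMatrix, Matrix.of_apply]
  have hN : (N : ℂ) ≠ 0 := Nat.cast_ne_zero.mpr (NeZero.ne N)
  set ζ : ℂ := Complex.exp ((2 * Real.pi * Complex.I) * ((n.val : ℂ) - (m.val : ℂ)) / N) with hζ
  have hterm : ∀ k : ZMod N,
      Complex.exp ((2 * Real.pi * Complex.I) * ((n.val : ℂ) * (k.val : ℂ)) / N) / N *
      Complex.exp (-(2 * Real.pi * Complex.I) * ((k.val : ℂ) * (m.val : ℂ)) / N)
        = ζ ^ (ZMod.val k) / N := by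
    intro k
    rw [hζ, ← Complex.exp_nat_mul, div_mul_eq_mul_div, ← Complex.exp_add]
    congr 1
    field_simp
    ring
  rw [Finset.sum_congr rfl (fun k _ => hterm k), ← Finset.sum_div, sum_pow_val]
  have hζN : ζ ^ N = 1 := by
    rw [hζ, ← Complex.exp_nat_mul]
    have : (N : ℂ) * (2 * Real.pi * Complex.I * ((n.val : ℂ) - (m.val : ℂ)) / N)
        = (((n.val : ℤ) - (m.val : ℤ) : ℤ) : ℂ) * (2 * Real.pi * Complex.I) := by
      push_cast; field_simp
    rw [this, Complex.exp_int_mul_two_pi_mul_I]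
  by_cases hnm : n = m
  · subst hnm
    have : ζ = 1 := by rw [hζ]; simp
    simp [this, Matrix.one_apply_eq, div_self hN]
  · have hζ1 : ζ ≠ 1 := by
      intro h1
      rw [hζ, Complex.exp_eq_one_iff] at h1
      obtain ⟨z, hz⟩ := h1
      have hπ : (2 * Real.pi * Complex.I) ≠ 0 := by
        simp [Real.pi_ne_zero, Complex.I_ne_zero]
      have hdc : ((n.val : ℂ) - (m.val : ℂ)) = z * N := by
        rw [div_eq_iff hN] at hz
        apply mul_left_cancel₀ hπ
        linear_combination hz
      have hint : (n.val : ℤ) - (m.val : ℤ) = z * N := by exact_mod_cast hdc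
      apply hnm
      have : ((n.val : ℤ) : ZMod N) = ((m.val : ℤ) : ZMod N) := by
        have : ((n.val : ℤ) : ZMod N) = (((m.val : ℤ) + z * N : ℤ) : ZMod N) := by
          congr 1; linarith
        rw [this]; push_cast [ZMod.natCast_self]; ring
      rwa [Int.cast_natCast, Int.cast_natCast, ZMod.natCast_zmod_val, ZMod.natCast_zmod_val] at this
    rw [geom_sum_eq hζ1, hζN]
    simp [Matrix.one_apply_ne hnm]

lemma idft_eq_conj_dft (N : ℕ) [NeZero N] (n m : ZMod N) :
    idftMatrix N n m = (starRingEnd ℂ) (dftMatrix N m n) / N := by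
  simp only [idftMatrix, dftMatrix, Matrix.of_apply, ← Complex.exp_conj]
  congr 2
  simp only [map_div₀, map_mul, map_neg, Complex.conj_I, Complex.conj_ofReal,
    map_natCast, map_ofNat]
  ring

open Matrix in
/-- If the rows of the `N × N` DFT indexed by `ℳ` form a full spark
matrix, then so do the rows indexed by the complement `ℳᶜ`. -/
theorem stmt_5 (N : ℕ) [NeZero N] (ℳ : Finset (ZMod N))
    (h : DFTFullSparkRows N ℳ) : DFTFullSparkRows N ℳᶜ := by
  classical
  intro g hg hdet0
  set A := dftMatrix N with hA
  set B := idftMatrix N with hB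
  have hN : (N : ℂ) ≠ 0 := Nat.cast_ne_zero.mpr (NeZero.ne N)
  obtain ⟨v, hv0, hvz⟩ := Matrix.exists_mulVec_eq_zero_iff.mpr hdet0
  -- extend v to w : ZMod N → ℂ supported on the range of g
  set w : ZMod N → ℂ := fun n => if hn : ∃ j, g j = n then v hn.choose else 0 with hw
  have hwg : ∀ j, w (g j) = v j := by
    intro j
    have hex : ∃ j', g j' = g j := ⟨j, rfl⟩
    simp only [hw, dif_pos hex]
    exact congrArg v (hg hex.choose_spec)
  have hwnot : ∀ n : ZMod N, (¬∃ j, g j = n) → w n = 0 := by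
    intro n hn; simp only [hw, dif_neg hn]
  set u : ZMod N → ℂ := A.mulVec w with hu
  have huc : ∀ i ∈ ℳᶜ, u i = 0 := by
    intro i hi
    have : u i = ∑ n : ZMod N, A i n * w n := rfl
    rw [this, ← Finset.sum_subset (Finset.subset_univ (Finset.univ.image g))
      (fun n _ hn => by
        rw [hwnot n (fun ⟨j, hj⟩ => hn (Finset.mem_image.mpr ⟨j, Finset.mem_univ j, hj⟩)),
          mul_zero]),
      Finset.sum_image (fun a _ b _ hab => hg hab)]
    have := congrFun hvz ⟨i, hi⟩
    simpa [Matrix.mulVec, dotProduct, hwg] using this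
  have hwu : B.mulVec u = w := by
    rw [hu, Matrix.mulVec_mulVec, idft_mul_dft N, Matrix.one_mulVec]
  -- the complementary column set
  set T : Finset (ZMod N) := (Finset.univ.image g)ᶜ with hT
  have hcardim : (Finset.univ.image g).card = ℳᶜ.card := by
    rw [Finset.card_image_of_injective _ hg, Finset.card_univ, Fintype.card_coe]
  have hcardT : T.card = ℳ.card := by
    rw [hT, Finset.card_compl, hcardim, Finset.card_compl, ZMod.card]
    have : ℳ.card ≤ N := by
      simpa [ZMod.card] using Finset.card_le_univ (s := ℳ)
    omega
  have hcards : Fintype.card {m : ZMod N // m ∈ ℳ} = Fintype.card {t : ZMod N // t ∈ T} := by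
    simp [Fintype.card_coe, hcardT]
  set e : {m : ZMod N // m ∈ ℳ} ≃ {t : ZMod N // t ∈ T} := Fintype.equivOfCardEq hcards with he
  -- the square matrix of h applied to the columns T
  set M2 : Matrix {m : ZMod N // m ∈ ℳ} {m : ZMod N // m ∈ ℳ} ℂ :=
    Matrix.of (fun i j : {m : ZMod N // m ∈ ℳ} => dftMatrix N (i : ZMod N) ((e j : ZMod N))) with hM2
  have hM2det : M2.det ≠ 0 := by
    refine h (fun j => ((e j : ZMod N))) ?_
    intro a b hab
    exact e.injective (Subtype.ext hab)
  set K : Matrix {m : ZMod N // m ∈ ℳ} {m : ZMod N // m ∈ ℳ} ℂ :=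
    Matrix.of (fun i j : {m : ZMod N // m ∈ ℳ} => B ((e i : ZMod N)) (j : ZMod N)) with hK
  have hKeq : K = (N : ℂ)⁻¹ • (M2.map (starRingEnd ℂ))ᵀ := by
    ext i j
    simp [hK, hB, hM2, idft_eq_conj_dft, Matrix.transpose_apply, Matrix.map_apply,
      div_eq_inv_mul, Matrix.smul_apply, smul_eq_mul]
  have hKdet : K.det ≠ 0 := by
    rw [hKeq, Matrix.det_smul, Matrix.det_transpose]
    refine mul_ne_zero (pow_ne_zero _ (inv_ne_zero hN)) ?_
    rw [← RingHom.mapMatrix_apply, ← RingHom.map_det]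
    simpa using hM2det
  set y : {m : ZMod N // m ∈ ℳ} → ℂ := fun j => u (j : ZMod N) with hy
  have hKy : K.mulVec y = 0 := by
    funext i
    have hiT : ((e i : ZMod N)) ∈ T := (e i).2
    have hwei : w ((e i : ZMod N)) = 0 := by
      refine hwnot _ (fun ⟨j, hj⟩ => ?_)
      exact (Finset.mem_compl.mp hiT) (Finset.mem_image.mpr ⟨j, Finset.mem_univ j, hj⟩)
    have hsum : ∑ n : ZMod N, B ((e i : ZMod N)) n * u n = 0 := by
      have := congrFun hwu ((e i : ZMod N))
      simpa [Matrix.mulVec, dotProduct, hwei] using this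
    rw [← Finset.sum_add_sum_compl ℳ] at hsum
    have hc0 : ∑ n ∈ ℳᶜ, B ((e i : ZMod N)) n * u n = 0 :=
      Finset.sum_eq_zero (fun n hn => by rw [huc n hn, mul_zero])
    rw [hc0, add_zero] at hsum
    have : (K.mulVec y) i = ∑ n ∈ ℳ, B ((e i : ZMod N)) n * u n := by
      rw [Matrix.mulVec, dotProduct]
      exact (Finset.sum_subtype ℳ (fun x => Iff.rfl)
        (fun n => B ((e i : ZMod N)) n * u n)).symm
    rw [this, hsum]; rfl
  have hy0 : y = 0 := Matrix.eq_zero_of_mulVec_eq_zero hKdet hKy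
  have hu0 : u = 0 := by
    funext n
    by_cases hn : n ∈ ℳ
    · exact congrFun hy0 ⟨n, hn⟩
    · exact huc n (Finset.mem_compl.mpr hn)
  have hw0 : w = 0 := by rw [← hwu, hu0, Matrix.mulVec_zero]
  apply hv0
  funext j
  rw [← hwg j, hw0]; rfl
end

section
/- Let N ≥ M and suppose the M×N matrix formed by selecting the rows of the N×N DFT matrix indexed by ℳ ⊆ ℤ_N is full spark. Then for any integer A relatively prime to N, the matrix formed by the rows indexed by Aℳ = {Am : m ∈ ℳ} is also full spark, and likewise for any translate ℳ + b. -/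
lemma dft_root_pow (N : ℕ) [NeZero N] :
    Complex.exp (-(2 * Real.pi * Complex.I) / N) ^ N = 1 := by
  have hN : (N : ℂ) ≠ 0 := Nat.cast_ne_zero.mpr (NeZero.ne N)
  rw [← Complex.exp_nat_mul, mul_div_cancel₀ _ hN, Complex.exp_neg,
    Complex.exp_two_pi_mul_I, inv_one]

lemma dft_root_pow_mod (N : ℕ) [NeZero N] (k : ℕ) :
    Complex.exp (-(2 * Real.pi * Complex.I) / N) ^ k =
      Complex.exp (-(2 * Real.pi * Complex.I) / N) ^ (k % N) := by
  conv_lhs => rw [← Nat.mod_add_div k N]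
  rw [pow_add, pow_mul, dft_root_pow, one_pow, mul_one]

lemma dft_eq (N : ℕ) [NeZero N] (m n : ZMod N) :
    dftMatrix N m n = Complex.exp (-(2 * Real.pi * Complex.I) / N) ^ (m * n).val := by
  have hN : (N : ℂ) ≠ 0 := Nat.cast_ne_zero.mpr (NeZero.ne N)
  have h1 : dftMatrix N m n
      = Complex.exp (-(2 * Real.pi * Complex.I) / N) ^ (m.val * n.val) := by
    rw [← Complex.exp_nat_mul]
    simp only [dftMatrix, Matrix.of_apply]
    congr 1
    push_cast
    ring
  rw [h1, dft_root_pow_mod, ZMod.val_mul]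

lemma dft_mul (N : ℕ) [NeZero N] (a m n : ZMod N) :
    dftMatrix N (a * m) n = dftMatrix N m (a * n) := by
  rw [dft_eq, dft_eq]
  ring_nf

lemma dft_add (N : ℕ) [NeZero N] (m b n : ZMod N) :
    dftMatrix N (m + b) n = dftMatrix N b n * dftMatrix N m n := by
  have h1 : (m + b) * n = b * n + m * n := by ring
  rw [dft_eq, dft_eq, dft_eq, ← pow_add, h1, ZMod.val_add, ← dft_root_pow_mod]

/-- Equivalence between `ℳ` and its image under multiplication by a unit modulus. -/
def eMul (N : ℕ) [NeZero N] (ℳ : Finset (ZMod N)) (A : ℕ) (hA : Nat.Coprime A N) :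
    {m : ZMod N // m ∈ ℳ} ≃ {m : ZMod N // m ∈ ℳ.image fun m => (A : ZMod N) * m} where
  toFun m := ⟨(A : ZMod N) * m, Finset.mem_image_of_mem _ m.2⟩
  invFun m := ⟨((ZMod.unitOfCoprime A hA)⁻¹ : (ZMod N)ˣ) * m, by
    obtain ⟨x, hx, hxe⟩ := Finset.mem_image.mp m.2
    have : ((ZMod.unitOfCoprime A hA : (ZMod N)ˣ) : ZMod N) = (A : ZMod N) := rfl
    rw [← hxe, ← this, Units.inv_mul_cancel_left]
    exact hx⟩
  left_inv m := by
    ext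
    have : ((ZMod.unitOfCoprime A hA : (ZMod N)ˣ) : ZMod N) = (A : ZMod N) := rfl
    simp only [← this, Units.inv_mul_cancel_left]
  right_inv m := by
    ext
    have : ((ZMod.unitOfCoprime A hA : (ZMod N)ˣ) : ZMod N) = (A : ZMod N) := rfl
    simp only [← this, Units.mul_inv_cancel_left]

lemma eMul_coe (N : ℕ) [NeZero N] (ℳ : Finset (ZMod N)) (A : ℕ) (hA : Nat.Coprime A N)
    (m : {m : ZMod N // m ∈ ℳ}) :
    ((eMul N ℳ A hA m : {m : ZMod N // m ∈ ℳ.image fun m => (A : ZMod N) * m}) : ZMod N)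
      = (A : ZMod N) * m := rfl

/-- Equivalence between `ℳ` and its translate. -/
def eAdd (N : ℕ) [NeZero N] (ℳ : Finset (ZMod N)) (b : ZMod N) :
    {m : ZMod N // m ∈ ℳ} ≃ {m : ZMod N // m ∈ ℳ.image fun m => m + b} where
  toFun m := ⟨(m : ZMod N) + b, Finset.mem_image_of_mem _ m.2⟩
  invFun m := ⟨(m : ZMod N) - b, by
    obtain ⟨x, hx, hxe⟩ := Finset.mem_image.mp m.2
    rw [← hxe, add_sub_cancel_right]
    exact hx⟩
  left_inv m := by ext; simp
  right_inv m := by ext; simp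

lemma eAdd_coe (N : ℕ) [NeZero N] (ℳ : Finset (ZMod N)) (b : ZMod N)
    (m : {m : ZMod N // m ∈ ℳ}) :
    ((eAdd N ℳ b m : {m : ZMod N // m ∈ ℳ.image fun m => m + b}) : ZMod N)
      = (m : ZMod N) + b := rfl

/-- If the rows of the `N × N` DFT indexed by `ℳ` form a full spark
matrix, then so do the rows indexed by `Aℳ` for any `A` coprime to `N`, and the rows
indexed by any translate `ℳ + b`. -/
theorem stmt_6 (N : ℕ) [NeZero N] (ℳ : Finset (ZMod N))
    (h : DFTFullSparkRows N ℳ) (A : ℕ) (hA : Nat.Coprime A N) (b : ZMod N) :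
    DFTFullSparkRows N (ℳ.image fun m => (A : ZMod N) * m) ∧
      DFTFullSparkRows N (ℳ.image fun m => m + b) := by
  constructor
  · intro g hg
    have hcoe : ((ZMod.unitOfCoprime A hA : (ZMod N)ˣ) : ZMod N) = (A : ZMod N) := rfl
    let e := eMul N ℳ A hA
    rw [← Matrix.det_submatrix_equiv_self e]
    have hmat : ((Matrix.of fun i j : {m : ZMod N // m ∈ ℳ.image fun m => (A : ZMod N) * m} =>
        dftMatrix N (i : ZMod N) (g j)).submatrix e e) =
        Matrix.of fun i j : {m : ZMod N // m ∈ ℳ} =>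
          dftMatrix N (i : ZMod N) ((A : ZMod N) * g (e j)) := by
      ext i j
      simp only [Matrix.submatrix_apply, Matrix.of_apply, eMul_coe]
      exact dft_mul N (A : ZMod N) (i : ZMod N) (g (e j))
    rw [hmat]
    apply h
    intro x y hxy
    have hAinj : Function.Injective fun z : ZMod N => (A : ZMod N) * z :=
      (ZMod.unitOfCoprime A hA).isUnit.mul_right_injective
    exact e.injective (hg (hAinj hxy))
  · intro g hg
    let e := eAdd N ℳ b
    rw [← Matrix.det_submatrix_equiv_self e]
    have hmat : ((Matrix.of fun i j : {m : ZMod N // m ∈ ℳ.image fun m => m + b} =>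
        dftMatrix N (i : ZMod N) (g j)).submatrix e e) =
        Matrix.of fun i j : {m : ZMod N // m ∈ ℳ} =>
          (fun j : {m : ZMod N // m ∈ ℳ} => dftMatrix N b (g (e j))) j *
            dftMatrix N (i : ZMod N) (g (e j)) := by
      ext i j
      simp only [Matrix.submatrix_apply, Matrix.of_apply, eAdd_coe]
      exact dft_add N (i : ZMod N) b (g (e j))
    rw [hmat, show (Matrix.of fun i j : {m : ZMod N // m ∈ ℳ} =>
        (fun j : {m : ZMod N // m ∈ ℳ} => dftMatrix N b (g (e j))) j *
          dftMatrix N (i : ZMod N) (g (e j))).det = _ from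
      Matrix.det_mul_row (fun j : {m : ZMod N // m ∈ ℳ} => dftMatrix N b (g (e j)))
        (Matrix.of fun i j : {m : ZMod N // m ∈ ℳ} => dftMatrix N (i : ZMod N) (g (e j)))]
    apply mul_ne_zero
    · apply Finset.prod_ne_zero_iff.mpr
      intro j _
      rw [dft_eq]
      exact pow_ne_zero _ (Complex.exp_ne_zero _)
    · exact h (fun j => g (e j)) fun x y hxy => e.injective (hg hxy)
end

section
/- Let N be a power of a prime p, and let P(z_1,...,z_M) be a polynomial with integer coefficients. If there exist N-th roots of unity ω_1,...,ω_M with P(ω_1,...,ω_M) = 0, then p divides P(1,...,1). -/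
/-- Let `N` be a power of a prime `p`, and let `P(z_1,…,z_M)` be a
polynomial with integer coefficients. If there exist `N`-th roots of unity
`ω_1,…,ω_M` with `P(ω_1,…,ω_M) = 0`, then `p` divides `P(1,…,1)`. -/
theorem stmt_7 (p N M : ℕ) (hp : p.Prime) (hN : ∃ k : ℕ, N = p ^ k) (hN0 : 0 < N)
    (P : MvPolynomial (Fin M) ℤ) (ω : Fin M → ℂ)
    (hω : ∀ m : Fin M, ω m ^ N = 1)
    (hP : MvPolynomial.aeval ω P = 0) :
    (p : ℤ) ∣ MvPolynomial.eval (fun _ : Fin M => (1 : ℤ)) P := by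
  obtain ⟨k, rfl⟩ := hN
  haveI : Fact p.Prime := ⟨hp⟩
  set N := p ^ k with hNdef
  have hζ : IsPrimitiveRoot (Complex.exp (2 * Real.pi * Complex.I / N)) N :=
    Complex.isPrimitiveRoot_exp N hN0.ne'
  set ζ := Complex.exp (2 * Real.pi * Complex.I / N)
  choose e he1 he2 using fun m => hζ.eq_pow_of_pow_eq_one (hω m)
  set Q : Polynomial ℤ := MvPolynomial.aeval (fun m => Polynomial.X ^ e m) P with hQ
  have hcomp : (Polynomial.aeval ζ).comp
      (MvPolynomial.aeval (fun m => (Polynomial.X : Polynomial ℤ) ^ e m)) =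
      MvPolynomial.aeval ω := by
    apply MvPolynomial.algHom_ext
    intro m
    simp [he2 m]
  have hQζ : Polynomial.aeval ζ Q = 0 := by
    have := congrArg (fun f => f P) hcomp
    simpa [hQ] using this.trans hP
  have hdvd : Polynomial.cyclotomic N ℤ ∣ Q := by
    rw [Polynomial.cyclotomic_eq_minpoly hζ hN0]
    exact minpoly.isIntegrallyClosed_dvd (hζ.isIntegral hN0) hQζ
  have hdvd1 : Polynomial.eval 1 (Polynomial.cyclotomic N ℤ) ∣ Polynomial.eval 1 Q := by
    obtain ⟨c, hc⟩ := hdvd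
    exact ⟨Polynomial.eval 1 c, by rw [hc, Polynomial.eval_mul]⟩
  have hQ1 : Polynomial.eval 1 Q = MvPolynomial.eval (fun _ : Fin M => (1 : ℤ)) P := by
    have hcomp2 : (Polynomial.aeval (1:ℤ)).comp
        (MvPolynomial.aeval (fun m => (Polynomial.X : Polynomial ℤ) ^ e m)) =
        MvPolynomial.aeval (fun _ : Fin M => (1 : ℤ)) := by
      apply MvPolynomial.algHom_ext
      intro m
      simp
    have h := congrArg (fun f => f P) hcomp2
    simp only [AlgHom.coe_comp, Function.comp_apply] at h
    have h2 : MvPolynomial.aeval (fun _ : Fin M => (1:ℤ)) P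
        = MvPolynomial.eval (fun _ : Fin M => (1:ℤ)) P :=
      RingHom.congr_fun (MvPolynomial.coe_aeval_eq_eval _) P
    rw [← Polynomial.coe_aeval_eq_eval, ← h2, ← h, hQ]
  have hpc : (p : ℤ) ∣ Polynomial.eval 1 (Polynomial.cyclotomic N ℤ) := by
    cases k with
    | zero => simp [hNdef]
    | succ n => rw [hNdef, Polynomial.eval_one_cyclotomic_prime_pow]
  rw [← hQ1]
  exact hpc.trans hdvd1
end

section
/- For any set of N ≥ 2 points on the unit sphere S² ⊂ ℝ³, the smallest angle between two distinct points is at most 2·arccos(1 − 2/N). -/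
open MeasureTheory Real Set
open scoped ENNReal
section
local notation "E3" => EuclideanSpace ℝ (Fin 3)

noncomputable def T3 : EuclideanSpace ℝ (Fin 3) → ℝ × ℂ := fun f => (f 0, ⟨f 1, f 2⟩)

lemma T3_mp : MeasurePreserving T3 volume volume := by
  have h1 := EuclideanSpace.volume_preserving_symm_measurableEquiv_toLp (ι := Fin 3)
  have h2 := MeasureTheory.volume_preserving_piFinSuccAbove (fun _ : Fin 3 => ℝ) 0
  have h3 : MeasurePreserving (Prod.map (id : ℝ → ℝ)
      (fun g : Fin 2 → ℝ => (Complex.measurableEquivRealProd.symm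
        (MeasurableEquiv.piFinTwo (fun _ => ℝ) g)))) volume volume :=
    (MeasurePreserving.id volume).prod
      ((Complex.volume_preserving_equiv_real_prod.symm).comp
        (MeasureTheory.volume_preserving_piFinTwo (fun _ => ℝ)))
  exact (h3.comp h2).comp h1

lemma T3_norm (v : EuclideanSpace ℝ (Fin 3)) :
    ‖v‖ ^ 2 = (T3 v).1 ^ 2 + ‖(T3 v).2‖ ^ 2 := by
  rw [EuclideanSpace.norm_eq, Real.sq_sqrt (by positivity)]
  simp [T3, Complex.sq_norm, Complex.normSq_mk, Fin.sum_univ_three]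
  ring

lemma slice_vol (s : Set ℝ) (hs : MeasurableSet s) (g : ℝ → ℝ) (hg : Measurable g)
    (hg0 : ∀ z ∈ s, 0 ≤ g z) :
    volume {q : ℝ × ℂ | q.1 ∈ s ∧ ‖q.2‖ ≤ g q.1} =
      ∫⁻ z in s, ENNReal.ofReal (π * g z ^ 2) := by
  classical
  have hmeas : MeasurableSet {q : ℝ × ℂ | q.1 ∈ s ∧ ‖q.2‖ ≤ g q.1} := by
    apply (hs.preimage measurable_fst).inter
    exact measurableSet_le (continuous_norm.measurable.comp measurable_snd)
      (hg.comp measurable_fst)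
  rw [MeasureTheory.Measure.volume_eq_prod, MeasureTheory.Measure.prod_apply hmeas]
  have hpre : ∀ z : ℝ, (Prod.mk z ⁻¹' {q : ℝ × ℂ | q.1 ∈ s ∧ ‖q.2‖ ≤ g q.1}) =
      if z ∈ s then Metric.closedBall (0:ℂ) (g z) else ∅ := by
    intro z
    by_cases hz : z ∈ s <;> ext w <;>
      simp [hz, Metric.mem_closedBall, Complex.dist_eq]
  simp_rw [hpre]
  rw [← MeasureTheory.lintegral_indicator hs]
  congr 1
  ext z
  by_cases hz : z ∈ s
  · simp only [hz, if_true, Set.indicator_of_mem hz, Complex.volume_closedBall]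
    rw [ENNReal.ofReal_mul pi_pos.le, mul_comm, ENNReal.ofReal_pow (hg0 z hz)]
    congr 1
    rw [← ENNReal.ofReal_coe_nnreal, NNReal.coe_real_pi]
  · simp [hz]

lemma lint_Ioc (a b : ℝ) (hab : a ≤ b) (f : ℝ → ℝ) (hf : Continuous f)
    (hf0 : ∀ z ∈ Set.Ioc a b, 0 ≤ f z) :
    ∫⁻ z in Set.Ioc a b, ENNReal.ofReal (f z) = ENNReal.ofReal (∫ z in a..b, f z) := by
  rw [intervalIntegral.integral_of_le hab,
    ← MeasureTheory.ofReal_integral_eq_lintegral_ofReal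
      (hf.integrableOn_Icc.mono_set Set.Ioc_subset_Icc_self)
      ((ae_restrict_iff' measurableSet_Ioc).2 (ae_of_all _ hf0))]

set_option maxHeartbeats 1000000 in
/-- Lower bound for the volume of a closed spherical sector. -/
lemma sector_vol (x : E3) (hx : ‖x‖ = 1) (c : ℝ) (hc0 : 0 < c) (hc1 : c < 1) :
    ENNReal.ofReal (2 * π / 3 * (1 - c)) ≤
      volume {v : E3 | ‖v‖ ≤ 1 ∧ c * ‖v‖ ≤ (inner ℝ x v : ℝ)} := by
  -- orthonormal basis with b 0 = x
  obtain ⟨b, hb⟩ : ∃ b : OrthonormalBasis (Fin 3) ℝ E3, ∀ i ∈ ({0} : Set (Fin 3)), b i = x := by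
    apply Orthonormal.exists_orthonormalBasis_extension_of_card_eq (v := fun _ => x)
    · exact ⟨fun i => by simpa using hx,
        fun {i j} hij => absurd (Subsingleton.elim i j) hij⟩
    · show Module.finrank ℝ E3 = Fintype.card (Fin 3)
      simp [finrank_euclideanSpace]
  have hb0 : b 0 = x := hb 0 rfl
  set U : E3 → ℝ × ℂ := fun v => T3 (b.repr v) with hU
  have hUmp : MeasurePreserving U volume volume := T3_mp.comp b.measurePreserving_repr
  have hU1 : ∀ v : E3, (U v).1 = (inner ℝ x v : ℝ) := by
    intro v
    have := b.repr_apply_apply v 0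
    rw [hb0] at this
    exact this
  have hUnorm : ∀ v : E3, ‖v‖ ^ 2 = (U v).1 ^ 2 + ‖(U v).2‖ ^ 2 := by
    intro v
    rw [hU]
    simpa [b.repr.norm_map v] using T3_norm (b.repr v)
  set k : ℝ := Real.sqrt (1 - c ^ 2) / c with hk
  have hk0 : 0 ≤ k := by positivity
  set A : Set (ℝ × ℂ) := {q | q.1 ∈ Set.Ioc 0 c ∧ ‖q.2‖ ≤ q.1 * k} with hA
  set B : Set (ℝ × ℂ) := {q | q.1 ∈ Set.Ioc c 1 ∧ ‖q.2‖ ≤ Real.sqrt (1 - q.1 ^ 2)} with hB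
  have hAm : MeasurableSet A :=
    (measurableSet_Ioc.preimage measurable_fst).inter
      (measurableSet_le (continuous_norm.measurable.comp measurable_snd)
        (measurable_fst.mul_const k))
  have hBm : MeasurableSet B :=
    (measurableSet_Ioc.preimage measurable_fst).inter
      (measurableSet_le (continuous_norm.measurable.comp measurable_snd)
        ((continuous_const.sub ((continuous_pow 2).comp continuous_fst)).sqrt.measurable))
  have hc2 : (0:ℝ) ≤ 1 - c ^ 2 := by nlinarith
  have hk2 : k ^ 2 = (1 - c ^ 2) / c ^ 2 := by
    rw [hk, div_pow, Real.sq_sqrt hc2]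
  -- the preimage of A ∪ B is contained in the sector
  have hsub : U ⁻¹' (A ∪ B) ⊆ {v : E3 | ‖v‖ ≤ 1 ∧ c * ‖v‖ ≤ (inner ℝ x v : ℝ)} := by
    intro v hv
    have hnv : 0 ≤ ‖v‖ := norm_nonneg v
    have habs : 0 ≤ ‖(U v).2‖ := norm_nonneg _
    rcases hv with hv | hv
    · obtain ⟨⟨hz0, hzc⟩, hw⟩ := hv
      have h1 : ‖v‖ ^ 2 ≤ ((U v).1 / c) ^ 2 := by
        rw [hUnorm v]
        have : ‖(U v).2‖ ^ 2 ≤ ((U v).1 * k) ^ 2 := by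
          apply sq_le_sq' _ hw; linarith
        rw [mul_pow, hk2] at this
        have hcc : (0:ℝ) < c ^ 2 := by positivity
        have h' : ‖(U v).2‖ ^ 2 * c ^ 2 ≤ (U v).1 ^ 2 * (1 - c ^ 2) := by
          calc ‖(U v).2‖ ^ 2 * c ^ 2
              ≤ (U v).1 ^ 2 * ((1 - c ^ 2) / c ^ 2) * c ^ 2 :=
                mul_le_mul_of_nonneg_right this hcc.le
            _ = (U v).1 ^ 2 * (1 - c ^ 2) := by field_simp
        rw [div_pow, le_div_iff₀ hcc]
        nlinarith
      have h2 : ‖v‖ ≤ (U v).1 / c := by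
        have hz : (0:ℝ) ≤ (U v).1 / c := by positivity
        nlinarith
      constructor
      · calc ‖v‖ ≤ (U v).1 / c := h2
          _ ≤ 1 := (div_le_one hc0).2 hzc
      · rw [← hU1 v]
        calc c * ‖v‖ ≤ c * ((U v).1 / c) := by nlinarith
          _ = (U v).1 := by field_simp
    · obtain ⟨⟨hzc, hz1⟩, hw⟩ := hv
      have h1 : ‖v‖ ^ 2 ≤ 1 := by
        rw [hUnorm v]
        have hzz : (0:ℝ) ≤ 1 - (U v).1 ^ 2 := by nlinarith
        have : ‖(U v).2‖ ^ 2 ≤ 1 - (U v).1 ^ 2 := by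
          have := sq_le_sq' (by linarith [Real.sqrt_nonneg (1 - (U v).1 ^ 2)] : -(Real.sqrt (1 - (U v).1 ^ 2)) ≤ ‖(U v).2‖) hw
          rwa [Real.sq_sqrt hzz] at this
        nlinarith
      have h2 : ‖v‖ ≤ 1 := by nlinarith
      refine ⟨h2, ?_⟩
      rw [← hU1 v]
      calc c * ‖v‖ ≤ c * 1 := by nlinarith
        _ = c := mul_one c
        _ ≤ (U v).1 := hzc.le
  -- volumes of the two pieces
  have hvolA : volume A = ENNReal.ofReal (π * k ^ 2 * (c ^ 3 / 3)) := by
    rw [hA, slice_vol _ measurableSet_Ioc (fun z => z * k) (measurable_id.mul_const k)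
      (fun z hz => mul_nonneg hz.1.le hk0)]
    have : ∀ z : ℝ, ENNReal.ofReal (π * (z * k) ^ 2) = ENNReal.ofReal ((π * k ^ 2) * z ^ 2) := by
      intro z; congr 1; ring
    simp_rw [this]
    rw [lint_Ioc 0 c hc0.le (fun z => π * k ^ 2 * z ^ 2) (continuous_const.mul (continuous_pow 2)) (fun z hz => by positivity),
      intervalIntegral.integral_const_mul, integral_pow]
    norm_num [mul_assoc]
  have hvolB : volume B = ENNReal.ofReal (π * ((1 - c) - (1 - c ^ 3) / 3)) := by
    rw [hB, slice_vol _ measurableSet_Ioc (fun z => Real.sqrt (1 - z ^ 2))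
      ((continuous_const.sub (continuous_pow 2)).sqrt.measurable)
      (fun z _ => Real.sqrt_nonneg _)]
    rw [lint_Ioc c 1 hc1.le (fun z => π * Real.sqrt (1 - z ^ 2) ^ 2)
      (continuous_const.mul (((continuous_const.sub (continuous_pow 2)).sqrt).pow 2))
      (fun z hz => by positivity)]
    congr 1
    rw [intervalIntegral.integral_congr (g := fun z => π * (1 - z ^ 2))
      (fun z hz => ?_)]
    · rw [intervalIntegral.integral_const_mul, intervalIntegral.integral_sub
        intervalIntegrable_const ((continuous_pow 2).intervalIntegrable c 1),
        intervalIntegral.integral_const, integral_pow]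
      norm_num
    · have hz' : z ∈ Set.Icc c 1 := by rwa [Set.uIcc_of_le hc1.le] at hz
      have : (0:ℝ) ≤ 1 - z ^ 2 := by nlinarith [hz'.1, hz'.2, hc0]
      simp only
      rw [Real.sq_sqrt this]
  -- put everything together
  have hdisj : Disjoint A B := by
    rw [Set.disjoint_left]
    rintro q ⟨⟨_, hqc⟩, _⟩ ⟨⟨hqc', _⟩, _⟩
    exact absurd hqc (not_le.mpr hqc')
  calc ENNReal.ofReal (2 * π / 3 * (1 - c))
      = volume A + volume B := by
        have hnn : (0:ℝ) ≤ 1 - c - (1 - c ^ 3) / 3 := by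
          nlinarith [mul_nonneg (sq_nonneg (1 - c)) (by linarith : (0:ℝ) ≤ 2 + c)]
        rw [hvolA, hvolB, ← ENNReal.ofReal_add (by positivity) (mul_nonneg pi_pos.le hnn)]
        congr 1
        rw [hk2]
        field_simp
        ring
    _ = volume (A ∪ B) := (measure_union hdisj hBm).symm
    _ = volume (U ⁻¹' (A ∪ B)) :=
        (hUmp.measure_preimage (hAm.union hBm).nullMeasurableSet).symm
    _ ≤ volume {v : E3 | ‖v‖ ≤ 1 ∧ c * ‖v‖ ≤ (inner ℝ x v : ℝ)} := measure_mono hsub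
end

lemma ball_vol : volume (Metric.closedBall (0 : EuclideanSpace ℝ (Fin 3)) 1) =
    ENNReal.ofReal (4 * π / 3) := by
  rw [EuclideanSpace.volume_closedBall]
  have hΓ : Real.Gamma ((Fintype.card (Fin 3) : ℝ) / 2 + 1) = 3 / 4 * Real.sqrt π := by
    rw [Fintype.card_fin]
    rw [show ((3:ℕ):ℝ) / 2 + 1 = (3 / 2 + 1 : ℝ) by norm_num,
      Real.Gamma_add_one (by norm_num),
      show (3:ℝ)/2 = 1/2 + 1 by norm_num,
      Real.Gamma_add_one (by norm_num), Real.Gamma_one_half_eq]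
    ring
  rw [hΓ, Fintype.card_fin]
  have hs : Real.sqrt π ^ 3 = π * Real.sqrt π := by
    rw [pow_succ, Real.sq_sqrt pi_pos.le]
  rw [hs]
  have h4 : π * Real.sqrt π / (3 / 4 * Real.sqrt π) = 4 * π / 3 := by
    have : Real.sqrt π ≠ 0 := by positivity
    field_simp
  rw [h4]
  simp

lemma inner_ge {E : Type*} [NormedAddCommGroup E] [InnerProductSpace ℝ E]
    (x y u : E) (hx : ‖x‖ = 1) (hy : ‖y‖ = 1) (hu : ‖u‖ = 1) :
    (inner ℝ x u : ℝ) * (inner ℝ y u : ℝ) -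
      Real.sqrt (1 - (inner ℝ x u : ℝ) ^ 2) * Real.sqrt (1 - (inner ℝ y u : ℝ) ^ 2) ≤
      (inner ℝ x y : ℝ) := by
  set a : ℝ := inner ℝ x u with ha
  set b : ℝ := inner ℝ y u with hb
  have hxx : (inner ℝ x x : ℝ) = 1 := by simp [real_inner_self_eq_norm_sq, hx]
  have hyy : (inner ℝ y y : ℝ) = 1 := by simp [real_inner_self_eq_norm_sq, hy]
  have huu : (inner ℝ u u : ℝ) = 1 := by simp [real_inner_self_eq_norm_sq, hu]
  have hux : (inner ℝ u x : ℝ) = a := by rw [real_inner_comm]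
  have huy : (inner ℝ u y : ℝ) = b := by rw [real_inner_comm]
  set x' : E := x - a • u with hx'
  set y' : E := y - b • u with hy'
  have h1 : (inner ℝ x' y' : ℝ) = (inner ℝ x y : ℝ) - a * b := by
    rw [hx', hy']
    simp only [inner_sub_left, inner_sub_right, real_inner_smul_left, real_inner_smul_right]
    rw [huy, ← ha, huu]
    ring
  have h2 : ‖x'‖ ^ 2 = 1 - a ^ 2 := by
    rw [← real_inner_self_eq_norm_sq, hx']
    simp only [inner_sub_left, inner_sub_right, real_inner_smul_left, real_inner_smul_right,
      hxx, huu]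
    rw [hux]
    ring
  have h3 : ‖y'‖ ^ 2 = 1 - b ^ 2 := by
    rw [← real_inner_self_eq_norm_sq, hy']
    simp only [inner_sub_left, inner_sub_right, real_inner_smul_left, real_inner_smul_right,
      hyy, huu]
    rw [huy]
    ring
  have hcs : |(inner ℝ x' y' : ℝ)| ≤ ‖x'‖ * ‖y'‖ := abs_real_inner_le_norm x' y'
  have hnx : ‖x'‖ = Real.sqrt (1 - a ^ 2) := by
    rw [← h2, Real.sqrt_sq (norm_nonneg _)]
  have hny : ‖y'‖ = Real.sqrt (1 - b ^ 2) := by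
    rw [← h3, Real.sqrt_sq (norm_nonneg _)]
  rw [hnx, hny, h1, abs_le] at hcs
  linarith [hcs.1]

lemma arccos_anti {s t : ℝ} (h : s ≤ t) : Real.arccos t ≤ Real.arccos s := by
  rw [Real.arccos_eq_pi_div_two_sub_arcsin, Real.arccos_eq_pi_div_two_sub_arcsin]
  exact sub_le_sub_left (Real.monotone_arcsin h) _

/-- For any `N ≥ 2` points on the unit sphere `S² ⊂ ℝ³`, the smallest
angle between two distinct points is at most `2·arccos(1 − 2/N)`. -/
theorem stmt_9 (N : ℕ) (hN : 2 ≤ N) (p : Fin N → EuclideanSpace ℝ (Fin 3))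
    (hp : ∀ i, ‖p i‖ = 1) :
    ∃ i j : Fin N, i ≠ j ∧
      Real.arccos (inner ℝ (p i) (p j) : ℝ) ≤ 2 * Real.arccos (1 - 2 / N) := by
  by_contra hcon
  push_neg at hcon
  have hij0 : (⟨0, by omega⟩ : Fin N) ≠ ⟨1, by omega⟩ := by
    intro h
    have := congrArg Fin.val h
    simp at this
  have hNR : (2:ℝ) ≤ (N:ℝ) := by exact_mod_cast hN
  set c₀ : ℝ := 1 - 2 / N with hc₀
  set γ₀ : ℝ := Real.arccos c₀ with hγ₀def
  rcases eq_or_lt_of_le hN with h2 | h3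
  · have hc0 : c₀ = 0 := by
      have hN2 : (N:ℝ) = 2 := by exact_mod_cast h2.symm
      rw [hc₀, hN2]; norm_num
    have := hcon ⟨0, by omega⟩ ⟨1, by omega⟩ hij0
    rw [hγ₀def, hc0, Real.arccos_zero] at this
    have h1 := Real.arccos_le_pi (inner ℝ (p ⟨0, by omega⟩) (p ⟨1, by omega⟩) : ℝ)
    linarith
  · have hNR3 : (3:ℝ) ≤ (N:ℝ) := by exact_mod_cast h3
    have hN0 : (0:ℝ) < N := by linarith
    have hc₀0 : 0 < c₀ := by
      rw [hc₀]
      have : (2:ℝ)/N < 1 := by rw [div_lt_one hN0]; linarith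
      linarith
    have hc₀1 : c₀ < 1 := by
      rw [hc₀]
      have : (0:ℝ) < 2/N := by positivity
      linarith
    have hγ₀pos : 0 < γ₀ := Real.arccos_pos.2 hc₀1
    have hγ₀lt : γ₀ < π / 2 :=
      lt_of_le_of_ne (Real.arccos_le_pi_div_two.2 hc₀0.le)
        (fun h => absurd (Real.arccos_eq_pi_div_two.1 h) hc₀0.ne')
    -- minimal angle
    obtain ⟨q, hq, hqmin⟩ := Finset.exists_min_image
      (Finset.univ.filter (fun q : Fin N × Fin N => q.1 ≠ q.2))
      (fun q => Real.arccos (inner ℝ (p q.1) (p q.2) : ℝ))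
      ⟨(⟨0, by omega⟩, ⟨1, by omega⟩), by simp [hij0]⟩
    have hqne : q.1 ≠ q.2 := (Finset.mem_filter.1 hq).2
    set m : ℝ := Real.arccos (inner ℝ (p q.1) (p q.2) : ℝ) with hm
    have hm2γ : 2 * γ₀ < m := hcon q.1 q.2 hqne
    set γ : ℝ := (γ₀ + min (π/2) (m/2)) / 2 with hγdef
    have hminγ : γ₀ < min (π/2) (m/2) := lt_min hγ₀lt (by linarith)
    have hγ₀γ : γ₀ < γ := by rw [hγdef]; linarith
    have hγpos : 0 < γ := lt_trans hγ₀pos hγ₀γ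
    have hγhalf : γ < π / 2 := by
      have h1 : min (π/2) (m/2) ≤ π/2 := min_le_left _ _
      rw [hγdef]; linarith
    have hγm : 2 * γ < m := by
      have h1 : min (π/2) (m/2) ≤ m/2 := min_le_right _ _
      rw [hγdef]; linarith
    have hγpi : γ ≤ π := by linarith [pi_pos]
    set c : ℝ := Real.cos γ with hcdef
    have hc0 : 0 < c := Real.cos_pos_of_mem_Ioo ⟨by linarith, hγhalf⟩
    have hc1 : c < 1 := by
      have := Real.cos_lt_cos_of_nonneg_of_le_pi (le_refl 0) hγpi hγpos
      simpa using this
    have hcc₀ : c < c₀ := by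
      have h1 : Real.cos γ < Real.cos γ₀ :=
        Real.cos_lt_cos_of_nonneg_of_le_pi (Real.arccos_nonneg _) hγpi hγ₀γ
      rwa [hγ₀def, Real.cos_arccos (by linarith) hc₀1.le] at h1
    -- sectors
    set K : Fin N → Set (EuclideanSpace ℝ (Fin 3)) :=
      fun i => {v | ‖v‖ ≤ 1 ∧ c * ‖v‖ ≤ (inner ℝ (p i) v : ℝ)} with hK
    have hKm : ∀ i, MeasurableSet (K i) := by
      intro i
      apply IsClosed.measurableSet
      apply IsClosed.inter
      · exact isClosed_le continuous_norm continuous_const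
      · exact isClosed_le (continuous_const.mul continuous_norm)
          (Continuous.inner continuous_const continuous_id)
    have hKsub : ∀ i, K i ⊆ Metric.closedBall 0 1 := by
      intro i v hv
      simpa [Metric.mem_closedBall, dist_zero_right] using hv.1
    have hKdisj : Pairwise (Function.onFun (AEDisjoint volume) K) := by
      intro i j hij
      have hsub : K i ∩ K j ⊆ {0} := by
        rintro v ⟨⟨hv1, hv2⟩, _, hv2'⟩
        simp only [Set.mem_singleton_iff]
        by_contra hv0
        have hnv : 0 < ‖v‖ := norm_pos_iff.2 hv0
        set u : EuclideanSpace ℝ (Fin 3) := ‖v‖⁻¹ • v with hu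
        have hu1 : ‖u‖ = 1 := by
          rw [hu, norm_smul, norm_inv, norm_norm, inv_mul_cancel₀ hnv.ne']
        have hinner : ∀ w : EuclideanSpace ℝ (Fin 3),
            c * ‖v‖ ≤ (inner ℝ w v : ℝ) → c ≤ (inner ℝ w u : ℝ) := by
          intro w hw
          rw [hu, real_inner_smul_right]
          calc c = ‖v‖⁻¹ * (c * ‖v‖) := by field_simp
            _ ≤ ‖v‖⁻¹ * (inner ℝ w v : ℝ) :=
              mul_le_mul_of_nonneg_left hw (by positivity)
        have hai : c ≤ (inner ℝ (p i) u : ℝ) := hinner _ hv2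
        have haj : c ≤ (inner ℝ (p j) u : ℝ) := hinner _ hv2'
        set a : ℝ := inner ℝ (p i) u with ha
        set b : ℝ := inner ℝ (p j) u with hb
        have ha1 : a ≤ 1 := by
          have := real_inner_le_norm (p i) u
          rwa [hp i, hu1, one_mul] at this
        have hb1 : b ≤ 1 := by
          have := real_inner_le_norm (p j) u
          rwa [hp j, hu1, one_mul] at this
        have haγ : Real.arccos a ≤ γ := by
          have := arccos_anti hai
          rwa [hcdef, Real.arccos_cos hγpos.le hγpi] at this
        have hbγ : Real.arccos b ≤ γ := by
          have := arccos_anti haj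
          rwa [hcdef, Real.arccos_cos hγpos.le hγpi] at this
        have hkey : Real.cos (2 * γ) ≤ (inner ℝ (p i) (p j) : ℝ) := by
          have h1 := inner_ge (p i) (p j) u (hp i) (hp j) hu1
          have h2 : Real.cos (Real.arccos a + Real.arccos b) =
              a * b - Real.sqrt (1 - a ^ 2) * Real.sqrt (1 - b ^ 2) := by
            rw [Real.cos_add, Real.cos_arccos (by linarith) ha1,
              Real.cos_arccos (by linarith) hb1, Real.sin_arccos, Real.sin_arccos]
          have h3 : Real.cos (2 * γ) ≤ Real.cos (Real.arccos a + Real.arccos b) := by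
            apply Real.cos_le_cos_of_nonneg_of_le_pi
              (add_nonneg (Real.arccos_nonneg _) (Real.arccos_nonneg _))
              (by linarith) (by linarith)
          calc Real.cos (2*γ) ≤ _ := h3
            _ = _ := h2
            _ ≤ (inner ℝ (p i) (p j) : ℝ) := h1
        have hfin : Real.arccos (inner ℝ (p i) (p j) : ℝ) ≤ 2 * γ := by
          have := arccos_anti hkey
          rwa [Real.arccos_cos (by linarith) (by linarith)] at this
        have hmin := hqmin (i, j) (by simp [hij])
        simp only at hmin
        linarith
      exact measure_mono_null hsub (measure_singleton 0)
    -- summing volumes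
    have hsum : (N : ℝ≥0∞) * ENNReal.ofReal (2 * π / 3 * (1 - c)) ≤
        ENNReal.ofReal (4 * π / 3) := by
      calc (N : ℝ≥0∞) * ENNReal.ofReal (2 * π / 3 * (1 - c))
          = ∑ i : Fin N, ENNReal.ofReal (2 * π / 3 * (1 - c)) := by
            rw [Finset.sum_const, Finset.card_univ, Fintype.card_fin, nsmul_eq_mul]
        _ ≤ ∑ i : Fin N, volume (K i) :=
            Finset.sum_le_sum fun i _ => sector_vol (p i) (hp i) c hc0 hc1
        _ = volume (⋃ i, K i) := by
            rw [← tsum_fintype (L := SummationFilter.unconditional _)]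
            exact (measure_iUnion₀ hKdisj (fun i => (hKm i).nullMeasurableSet)).symm
        _ ≤ volume (Metric.closedBall 0 1) := measure_mono (Set.iUnion_subset hKsub)
        _ = ENNReal.ofReal (4 * π / 3) := ball_vol
    have hreal : (N : ℝ) * (2 * π / 3 * (1 - c)) ≤ 4 * π / 3 := by
      rw [← ENNReal.ofReal_natCast N, ← ENNReal.ofReal_mul (by positivity)] at hsum
      exact (ENNReal.ofReal_le_ofReal_iff (by positivity)).1 hsum
    have hNc : (N : ℝ) * (1 - c) ≤ 2 := by nlinarith [pi_pos]
    have : c₀ ≤ c := by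
      rw [hc₀]
      have : 1 - c ≤ 2 / (N:ℝ) := by
        rw [le_div_iff₀ hN0]
        linarith [hNc]
      linarith
    linarith
end

section
/- Let Φ be an M×N unit-norm frame with restricted isometry constant δ_{2K}. Then for any index n and any two subsets 𝒦, 𝒦' ⊆ {1,...,N} of size at most K with n ∈ 𝒦 and n ∉ 𝒦', the distance between the equal-weight averages satisfies ‖(1/|𝒦|)∑_{i∈𝒦} φ_i − (1/|𝒦'|)∑_{j∈𝒦'} φ_j‖ ≥ sqrt((1 − δ_{2K})/(K(K−1))). -/
set_option maxHeartbeats 1000000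


/-- If `Φ` is a unit-norm frame with restricted isometry constant
`δ` of order `2K`, then for any `n`, and any subsets `𝒦, 𝒦'` of sizes in `[2,K]`
and `[1,K]` respectively with `n ∈ 𝒦` and `n ∉ 𝒦'`, the distance between the
equal-weight averages of the corresponding columns is at least
`√((1 − δ)/(K(K−1)))`. -/
theorem stmt_12 (M N K : ℕ) (Φ : Matrix (Fin M) (Fin N) ℝ)
    (hunit : ∀ n : Fin N, ∑ m : Fin M, Φ m n ^ 2 = 1)
    (δ : ℝ)
    (hRIP : ∀ x : Fin N → ℝ,
      (∃ s : Finset (Fin N), s.card ≤ 2 * K ∧ ∀ i ∉ s, x i = 0) →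
      (1 - δ) * (∑ i, x i ^ 2) ≤ ∑ m, (∑ i, Φ m i * x i) ^ 2 ∧
      ∑ m, (∑ i, Φ m i * x i) ^ 2 ≤ (1 + δ) * (∑ i, x i ^ 2))
    (n : Fin N) (𝒦 𝒦' : Finset (Fin N))
    (hn : n ∈ 𝒦) (hn' : n ∉ 𝒦')
    (h𝒦₂ : 2 ≤ 𝒦.card) (h𝒦K : 𝒦.card ≤ K)
    (h𝒦'₁ : 1 ≤ 𝒦'.card) (h𝒦'K : 𝒦'.card ≤ K) :
    Real.sqrt ((1 - δ) / ((K : ℝ) * ((K : ℝ) - 1))) ≤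
      Real.sqrt (∑ m : Fin M,
        ((1 / (𝒦.card : ℝ)) * ∑ i ∈ 𝒦, Φ m i
          - (1 / (𝒦'.card : ℝ)) * ∑ j ∈ 𝒦', Φ m j) ^ 2) := by
  have hK2 : 2 ≤ K := le_trans h𝒦₂ h𝒦K
  set a : ℝ := (𝒦.card : ℝ) with ha_def
  set b : ℝ := (𝒦'.card : ℝ) with hb_def
  have ha2 : (2:ℝ) ≤ a := by rw [ha_def]; exact_mod_cast h𝒦₂
  have hb1 : (1:ℝ) ≤ b := by rw [hb_def]; exact_mod_cast h𝒦'₁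
  have haK : a ≤ (K:ℝ) := by rw [ha_def]; exact_mod_cast h𝒦K
  have hbK : b ≤ (K:ℝ) := by rw [hb_def]; exact_mod_cast h𝒦'K
  have hKR : (2:ℝ) ≤ (K:ℝ) := by exact_mod_cast hK2
  have ha0 : (0:ℝ) < a := by linarith
  have hb0 : (0:ℝ) < b := by linarith
  set x : Fin N → ℝ :=
    fun i => (if i ∈ 𝒦 then a⁻¹ else 0) - (if i ∈ 𝒦' then b⁻¹ else 0) with hx
  have hsupp : ∃ s : Finset (Fin N), s.card ≤ 2*K ∧ ∀ i ∉ s, x i = 0 := by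
    refine ⟨𝒦 ∪ 𝒦', ?_, ?_⟩
    · calc (𝒦 ∪ 𝒦').card ≤ 𝒦.card + 𝒦'.card := Finset.card_union_le _ _
        _ ≤ 2*K := by omega
    · intro i hi
      simp only [Finset.mem_union, not_or] at hi
      simp [hx, hi.1, hi.2]
  obtain ⟨h1, _⟩ := hRIP x hsupp
  have himg : ∀ m, ∑ i, Φ m i * x i
      = (1/a) * ∑ i ∈ 𝒦, Φ m i - (1/b) * ∑ j ∈ 𝒦', Φ m j := by
    intro m
    simp only [hx, mul_sub, Finset.sum_sub_distrib, mul_ite, mul_zero]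
    rw [Finset.sum_ite_mem, Finset.sum_ite_mem, Finset.univ_inter, Finset.univ_inter,
      ← Finset.sum_mul, ← Finset.sum_mul]
    ring
  set t : ℝ := ((𝒦 ∩ 𝒦').card : ℝ) with ht_def
  have ht0 : (0:ℝ) ≤ t := by positivity
  have htb : t ≤ b := by
    have h := Finset.card_le_card (Finset.inter_subset_right (s₁ := 𝒦) (s₂ := 𝒦'))
    rw [ht_def, hb_def]; exact_mod_cast h
  have hta : t ≤ a - 1 := by
    have hsub : 𝒦 ∩ 𝒦' ⊆ 𝒦.erase n := by
      intro i hi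
      rw [Finset.mem_inter] at hi
      rw [Finset.mem_erase]
      exact ⟨fun h => hn' (h ▸ hi.2), hi.1⟩
    have := Finset.card_le_card hsub
    rw [Finset.card_erase_of_mem hn] at this
    have h1 : ((𝒦 ∩ 𝒦').card : ℝ) ≤ ((𝒦.card - 1 : ℕ) : ℝ) := by exact_mod_cast this
    have : ((𝒦.card - 1 : ℕ) : ℝ) = a - 1 := by
      rw [ha_def]
      have : 1 ≤ 𝒦.card := le_trans one_le_two h𝒦₂
      push_cast [Nat.cast_sub this]
      ring
    linarith [h1, this.le, this.ge]
  have hnorm : ∑ i, x i ^ 2 = a⁻¹ + b⁻¹ - 2 * t / (a*b) := by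
    have hterm : ∀ i : Fin N, x i ^ 2 =
        ((if i ∈ 𝒦 then a⁻¹^2 else 0) + (if i ∈ 𝒦' then b⁻¹^2 else 0))
        - (if i ∈ 𝒦 ∩ 𝒦' then 2 * (a⁻¹ * b⁻¹) else 0) := by
      intro i
      by_cases h1 : i ∈ 𝒦 <;> by_cases h2 : i ∈ 𝒦' <;>
        simp [hx, h1, h2, Finset.mem_inter] <;> ring
    rw [Finset.sum_congr rfl (fun i _ => hterm i), Finset.sum_sub_distrib,
      Finset.sum_add_distrib, Finset.sum_ite_mem, Finset.sum_ite_mem,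
      Finset.sum_ite_mem, Finset.univ_inter, Finset.univ_inter, Finset.univ_inter,
      Finset.sum_const, Finset.sum_const, Finset.sum_const]
    simp only [nsmul_eq_mul, ← ha_def, ← hb_def, ← ht_def]
    field_simp [ha0.ne', hb0.ne']
  have hKK1 : (0:ℝ) < (K:ℝ) * ((K:ℝ) - 1) := by nlinarith
  have hxlb : 1 / ((K:ℝ) * ((K:ℝ) - 1)) ≤ ∑ i, x i ^ 2 := by
    rw [hnorm]
    have hab : (0:ℝ) < a * b := by positivity
    rw [div_le_iff₀ hKK1]
    rw [show a⁻¹ + b⁻¹ - 2*t/(a*b) = (a + b - 2*t)/(a*b) by field_simp; ring]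
    rw [div_mul_eq_mul_div, le_div_iff₀ hab]
    by_cases hba : 𝒦'.card + 1 ≤ 𝒦.card
    · have hba' : b ≤ a - 1 := by
        rw [ha_def, hb_def]
        have : (↑(𝒦'.card + 1) : ℝ) ≤ (𝒦.card : ℝ) := by exact_mod_cast hba
        push_cast at this; linarith
      have hbK1 : b ≤ (K:ℝ) - 1 := by linarith
      nlinarith [mul_le_mul haK hbK1 (by linarith : (0:ℝ) ≤ b) (by linarith : (0:ℝ) ≤ (K:ℝ)),
        mul_nonneg (by linarith : (0:ℝ) ≤ a + b - 2*t - 1) hKK1.le]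
    · push_neg at hba
      have hab' : a ≤ b := by
        rw [ha_def, hb_def]; exact_mod_cast Nat.lt_succ_iff.mp hba
      have h2 : (2:ℝ) ≤ a + b - 2*t := by linarith
      nlinarith [mul_le_mul haK hbK (by linarith : (0:ℝ) ≤ b) (by linarith : (0:ℝ) ≤ (K:ℝ)),
        mul_nonneg (by linarith : (0:ℝ) ≤ a + b - 2*t - 2) hKK1.le,
        mul_nonneg (by linarith : (0:ℝ) ≤ (K:ℝ)) (by linarith : (0:ℝ) ≤ (K:ℝ) - 2)]
  apply Real.sqrt_le_sqrt
  have hsum : ∑ m : Fin M,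
      ((1 / a) * ∑ i ∈ 𝒦, Φ m i - (1 / b) * ∑ j ∈ 𝒦', Φ m j) ^ 2
      = ∑ m, (∑ i, Φ m i * x i) ^ 2 :=
    Finset.sum_congr rfl fun m _ => by rw [himg m]
  rw [hsum]
  by_cases hδ : δ ≤ 1
  · have h1δ : (0:ℝ) ≤ 1 - δ := by linarith
    calc (1 - δ) / ((K:ℝ) * ((K:ℝ) - 1))
        = (1 - δ) * (1 / ((K:ℝ) * ((K:ℝ) - 1))) := by ring
      _ ≤ (1 - δ) * (∑ i, x i ^ 2) := by
          exact mul_le_mul_of_nonneg_left hxlb h1δ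
      _ ≤ ∑ m, (∑ i, Φ m i * x i) ^ 2 := h1
  · push_neg at hδ
    have : (1 - δ) / ((K:ℝ) * ((K:ℝ) - 1)) ≤ 0 := by
      apply div_nonpos_of_nonpos_of_nonneg <;> linarith
    exact le_trans this (by positivity)
end

section
/- For any matrix Φ with restricted orthogonality constant θ_K and restricted isometry constants δ_K, δ_{2K}, one has θ_K ≤ δ_{2K} ≤ 2θ_K + δ_1. -/
namespace Stmt13Aux

variable {M N : ℕ}

noncomputable def G (Φ : Matrix (Fin M) (Fin N) ℝ) (i j : Fin N) : ℝ := ∑ m, Φ m i * Φ m j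

lemma bilin_eq (Φ : Matrix (Fin M) (Fin N) ℝ) (x y : Fin N → ℝ) :
    ∑ m, (∑ i, Φ m i * x i) * (∑ i, Φ m i * y i)
      = ∑ i, ∑ j, x i * y j * G Φ i j := by
  calc ∑ m, (∑ i, Φ m i * x i) * (∑ i, Φ m i * y i)
      = ∑ m, ∑ i, ∑ j, (Φ m i * x i) * (Φ m j * y j) := by
        refine Finset.sum_congr rfl fun m _ => ?_
        rw [Finset.sum_mul_sum]
    _ = ∑ i, ∑ j, ∑ m, (Φ m i * x i) * (Φ m j * y j) := by
        rw [Finset.sum_comm]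
        exact Finset.sum_congr rfl fun i _ => Finset.sum_comm
    _ = ∑ i, ∑ j, x i * y j * G Φ i j := by
        refine Finset.sum_congr rfl fun i _ => Finset.sum_congr rfl fun j _ => ?_
        rw [G, Finset.mul_sum]
        exact Finset.sum_congr rfl fun m _ => by ring

lemma choose_id (u b : ℕ) :
    (u+2).choose (b+1) * ((b+1) * (u+1-b)) = ((u+2)*(u+1)) * (u.choose b) := by
  have h1 : (u+2) * (u+1).choose b = (u+2).choose (b+1) * (b+1) := Nat.add_one_mul_choose_eq (u+1) b
  have h2 : (u+1).choose (b+1) * (b+1) = (u+1).choose b * (u+1-b) := Nat.choose_succ_right_eq (u+1) b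
  have h3 : (u+1) * u.choose b = (u+1).choose (b+1) * (b+1) := Nat.add_one_mul_choose_eq u b
  calc (u+2).choose (b+1) * ((b+1)*(u+1-b)) = ((u+2).choose (b+1) * (b+1)) * (u+1-b) := by ring
   _ = ((u+2) * (u+1).choose b) * (u+1-b) := by rw [h1]
   _ = (u+2) * ((u+1).choose b * (u+1-b)) := by ring
   _ = (u+2) * ((u+1).choose (b+1) * (b+1)) := by rw [h2]
   _ = (u+2) * ((u+1) * u.choose b) := by rw [h3]
   _ = _ := by ring

lemma choose_id' (t a : ℕ) (h2 : 2 ≤ t) (ha : 1 ≤ a) (hat : a ≤ t - 1) :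
    t.choose a * (a * (t - a)) = (t*(t-1)) * ((t-2).choose (a-1)) := by
  obtain ⟨u, rfl⟩ : ∃ u, t = u + 2 := ⟨t - 2, by omega⟩
  obtain ⟨b, rfl⟩ : ∃ b, a = b + 1 := ⟨a - 1, by omega⟩
  have := choose_id u b
  simpa [Nat.add_sub_cancel, show u + 2 - (b+1) = u + 1 - b from by omega,
    show u + 2 - 1 = u + 1 from rfl] using this

lemma parity_bound (t a : ℕ) (h2 : 2 ≤ t) (ha : a = (t+1)/2) :
    t * (t-1) ≤ 4 * (a * (t - a)) := by
  have h : 2*a = t + 1 ∨ 2*a = t := by omega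
  have hat : a ≤ t := by omega
  zify [hat, show 1 ≤ t from by omega]
  rcases h with h | h <;> [(have : (2*a : ℤ) = t + 1 := by exact_mod_cast h);
    (have : (2*a : ℤ) = t := by exact_mod_cast h)] <;> nlinarith [this]

lemma count_lemma (s : Finset (Fin N)) (a : ℕ) (ha : 1 ≤ a) {i j : Fin N}
    (hi : i ∈ s) (hj : j ∈ s) (hij : j ≠ i) :
    ((Finset.powersetCard a s).filter (fun A => i ∈ A ∧ j ∉ A)).card
      = (s.card - 2).choose (a-1) := by
  have hs2 : 2 ≤ s.card := by
    have := Finset.card_le_card (show {j, i} ⊆ s from by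
      intro k hk; rcases Finset.mem_insert.mp hk with rfl | hk
      · exact hj
      · rw [Finset.mem_singleton.mp hk]; exact hi)
    simpa [Finset.card_insert_of_notMem, Finset.mem_singleton, hij] using this
  have hT : ((s.erase i).erase j).card = s.card - 2 := by
    rw [Finset.card_erase_of_mem (Finset.mem_erase.mpr ⟨hij, hj⟩),
      Finset.card_erase_of_mem hi]
    omega
  rw [← hT, ← Finset.card_powersetCard]
  apply Finset.card_bij' (fun A _ => A.erase i) (fun B _ => insert i B)
  · intro A hA
    simp only [Finset.mem_filter] at hA
    exact Finset.insert_erase hA.2.1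
  · intro B hB
    rw [Finset.mem_powersetCard] at hB
    have hiB : i ∉ B := fun h => (Finset.mem_erase.mp (Finset.mem_erase.mp (hB.1 h)).2).1 rfl
    exact Finset.erase_insert hiB
  · intro A hA
    simp only [Finset.mem_filter, Finset.mem_powersetCard] at hA
    obtain ⟨⟨hAs, hAc⟩, hiA, hjA⟩ := hA
    rw [Finset.mem_powersetCard]
    constructor
    · intro k hk
      rw [Finset.mem_erase] at hk
      refine Finset.mem_erase.mpr ⟨?_, Finset.mem_erase.mpr ⟨hk.1, hAs hk.2⟩⟩
      rintro rfl; exact hjA hk.2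
    · rw [Finset.card_erase_of_mem hiA, hAc]
  · intro B hB
    rw [Finset.mem_powersetCard] at hB
    obtain ⟨hBs, hBc⟩ := hB
    have hiB : i ∉ B := fun h => (Finset.mem_erase.mp (Finset.mem_erase.mp (hBs h)).2).1 rfl
    simp only [Finset.mem_filter, Finset.mem_powersetCard]
    refine ⟨⟨?_, ?_⟩, Finset.mem_insert_self _ _, ?_⟩
    · intro k hk
      rcases Finset.mem_insert.mp hk with rfl | hk
      · exact hi
      · exact Finset.mem_of_mem_erase (Finset.mem_of_mem_erase (hBs hk))
    · rw [Finset.card_insert_of_notMem hiB, hBc]; omega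
    · intro hjB
      rcases Finset.mem_insert.mp hjB with rfl | hk
      · exact hij rfl
      · exact (Finset.mem_erase.mp (hBs hk)).1 rfl

lemma sum_ite_restrict (x : Fin N → ℝ) (f : Fin N → Fin N → ℝ) (A B : Finset (Fin N)) :
    ∑ i, ∑ j, (if i ∈ A then x i else 0) * (if j ∈ B then x j else 0) * f i j
    = ∑ i ∈ A, ∑ j ∈ B, x i * x j * f i j := by
  have h1 : ∀ i : Fin N, (∑ j, (if i ∈ A then x i else 0) * (if j ∈ B then x j else 0) * f i j)
      = if i ∈ A then ∑ j ∈ B, x i * x j * f i j else 0 := by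
    intro i
    by_cases hi : i ∈ A
    · simp only [hi, if_true]
      calc ∑ j, x i * (if j ∈ B then x j else 0) * f i j
          = ∑ j, (if j ∈ B then x i * x j * f i j else 0) :=
            Finset.sum_congr rfl fun j _ => by split <;> simp
        _ = ∑ j ∈ Finset.univ ∩ B, x i * x j * f i j := Finset.sum_ite_mem _ _ _
        _ = ∑ j ∈ B, x i * x j * f i j := by rw [Finset.univ_inter]
    · simp [hi]
  rw [Finset.sum_congr rfl fun i _ => h1 i, Finset.sum_ite_mem, Finset.univ_inter]

lemma restrict_pair (g : Fin N → Fin N → ℝ) (s A : Finset (Fin N)) (hA : A ⊆ s) :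
    ∑ i ∈ A, ∑ j ∈ s \ A, g i j
    = ∑ i ∈ s, ∑ j ∈ s.erase i, (if i ∈ A ∧ j ∉ A then g i j else 0) := by
  have h1 : ∀ i ∈ s, (∑ j ∈ s.erase i, (if i ∈ A ∧ j ∉ A then g i j else 0))
      = if i ∈ A then ∑ j ∈ s \ A, g i j else 0 := by
    intro i his
    by_cases hi : i ∈ A
    · simp only [hi, true_and, if_true]
      rw [← Finset.sum_filter]
      congr 1
      ext k
      simp only [Finset.mem_filter, Finset.mem_erase, Finset.mem_sdiff]
      constructor
      · rintro ⟨⟨_, hk⟩, hkA⟩; exact ⟨hk, hkA⟩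
      · rintro ⟨hk, hkA⟩; exact ⟨⟨fun h => hkA (h ▸ hi), hk⟩, hkA⟩
    · simp [hi]
  rw [Finset.sum_congr rfl h1, Finset.sum_ite_mem,
    Finset.inter_eq_right.mpr hA]

lemma cross_bound (K : ℕ) (hK : 1 ≤ K) (Φ : Matrix (Fin M) (Fin N) ℝ) (θK : ℝ) (hθ0 : 0 ≤ θK)
    (hθm : ∀ x y : Fin N → ℝ,
        (∃ s : Finset (Fin N), s.card ≤ K ∧ ∀ i ∉ s, x i = 0) →
        (∃ s : Finset (Fin N), s.card ≤ K ∧ ∀ i ∉ s, y i = 0) →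
        (∀ i, x i = 0 ∨ y i = 0) →
        |∑ m, (∑ i, Φ m i * x i) * (∑ i, Φ m i * y i)| ≤
          θK * Real.sqrt (∑ i, x i ^ 2) * Real.sqrt (∑ i, y i ^ 2))
    (x : Fin N → ℝ) (s : Finset (Fin N)) (hsc : s.card ≤ 2*K) (hs : ∀ i ∉ s, x i = 0) :
    |∑ i ∈ s, ∑ j ∈ s.erase i, x i * x j * G Φ i j| ≤ 2 * θK * ∑ i, x i ^ 2 := by
  have hS0 : (0:ℝ) ≤ ∑ i, x i ^ 2 := Finset.sum_nonneg fun i _ => sq_nonneg _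
  by_cases ht : s.card ≤ 1
  · have : ∑ i ∈ s, ∑ j ∈ s.erase i, x i * x j * G Φ i j = 0 := by
      refine Finset.sum_eq_zero fun i hi => Finset.sum_eq_zero fun j hj => ?_
      exfalso
      have h1 : ({j, i} : Finset (Fin N)) ⊆ s := by
        intro k hk
        rcases Finset.mem_insert.mp hk with rfl | hk
        · exact Finset.mem_of_mem_erase hj
        · rw [Finset.mem_singleton.mp hk]; exact hi
      have h2 := Finset.card_le_card h1
      have hji : j ≠ i := (Finset.mem_erase.mp hj).1
      rw [Finset.card_insert_of_notMem (by simpa using hji), Finset.card_singleton] at h2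
      omega
    rw [this, abs_zero]
    positivity
  push_neg at ht
  set t := s.card with htdef
  set a := (t+1)/2 with hadef
  have ha1 : 1 ≤ a := by omega
  have haK : a ≤ K := by omega
  have htaK : t - a ≤ K := by omega
  have hat : a ≤ t - 1 := by omega
  set S := ∑ i, x i ^ 2 with hSdef
  set Cr := ∑ i ∈ s, ∑ j ∈ s.erase i, x i * x j * G Φ i j with hCr
  set P := Finset.powersetCard a s with hP
  set c1 := (t-2).choose (a-1) with hc1
  set D : Finset (Fin N) → ℝ := fun A =>
    ∑ i ∈ A, ∑ j ∈ s \ A, x i * x j * G Φ i j with hD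
  have hid : ∑ A ∈ P, D A = (c1 : ℝ) * Cr := by
    have h1 : ∀ A ∈ P, D A = ∑ i ∈ s, ∑ j ∈ s.erase i,
        (if i ∈ A ∧ j ∉ A then x i * x j * G Φ i j else 0) := by
      intro A hA
      rw [Finset.mem_powersetCard] at hA
      exact restrict_pair _ s A hA.1
    rw [Finset.sum_congr rfl h1, Finset.sum_comm]
    rw [hCr, Finset.mul_sum]
    refine Finset.sum_congr rfl fun i hi => ?_
    rw [Finset.sum_comm, Finset.mul_sum]
    refine Finset.sum_congr rfl fun j hj => ?_
    rw [← Finset.sum_filter, Finset.sum_const, nsmul_eq_mul]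
    congr 1
    exact_mod_cast count_lemma s a ha1 hi (Finset.mem_of_mem_erase hj) (Finset.mem_erase.mp hj).1
  have hbnd : ∀ A ∈ P, |D A| ≤ θK * S / 2 := by
    intro A hA
    rw [Finset.mem_powersetCard] at hA
    obtain ⟨hAs, hAc⟩ := hA
    set xA : Fin N → ℝ := fun i => if i ∈ A then x i else 0 with hxA
    set xB : Fin N → ℝ := fun i => if i ∈ s \ A then x i else 0 with hxB
    have hbil := hθm xA xB ⟨A, by omega, fun i hi => if_neg hi⟩
      ⟨s \ A, by rw [Finset.card_sdiff_of_subset hAs]; omega, fun i hi => if_neg hi⟩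
      (fun i => by
        by_cases hiA : i ∈ A
        · right; exact if_neg (fun h => (Finset.mem_sdiff.mp h).2 hiA)
        · left; exact if_neg hiA)
    rw [bilin_eq, sum_ite_restrict] at hbil
    have hsplit : (∑ i, xA i ^ 2) + (∑ i, xB i ^ 2) = S := by
      rw [← Finset.sum_add_distrib]
      refine Finset.sum_congr rfl fun i _ => ?_
      by_cases hiA : i ∈ A
      · have : i ∉ s \ A := fun h => (Finset.mem_sdiff.mp h).2 hiA
        simp [hxA, hxB, hiA, this]
      · by_cases his : i ∈ s
        · have : i ∈ s \ A := Finset.mem_sdiff.mpr ⟨his, hiA⟩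
          simp [hxA, hxB, hiA, his, this]
        · have : i ∉ s \ A := fun h => his (Finset.mem_sdiff.mp h).1
          simp [hxA, hxB, hiA, this, hs i his]
    have hp : (0:ℝ) ≤ ∑ i, xA i ^ 2 := Finset.sum_nonneg fun i _ => sq_nonneg _
    have hq : (0:ℝ) ≤ ∑ i, xB i ^ 2 := Finset.sum_nonneg fun i _ => sq_nonneg _
    have hsq : Real.sqrt (∑ i, xA i ^ 2) * Real.sqrt (∑ i, xB i ^ 2)
        ≤ ((∑ i, xA i ^ 2) + (∑ i, xB i ^ 2)) / 2 := by
      nlinarith [Real.sq_sqrt hp, Real.sq_sqrt hq,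
        sq_nonneg (Real.sqrt (∑ i, xA i ^ 2) - Real.sqrt (∑ i, xB i ^ 2)),
        Real.sqrt_nonneg (∑ i, xA i ^ 2), Real.sqrt_nonneg (∑ i, xB i ^ 2)]
    calc |D A| ≤ θK * Real.sqrt (∑ i, xA i ^ 2) * Real.sqrt (∑ i, xB i ^ 2) := hbil
      _ ≤ θK * S / 2 := by
          rw [mul_assoc]
          rw [← hsplit]
          nlinarith [hsq, Real.sqrt_nonneg (∑ i, xA i ^ 2), Real.sqrt_nonneg (∑ i, xB i ^ 2)]
  have hchain : (c1:ℝ) * |Cr| ≤ (t.choose a : ℝ) * (θK * S / 2) := by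
    calc (c1:ℝ) * |Cr| = |(c1:ℝ) * Cr| := by
          rw [abs_mul, abs_of_nonneg (by positivity : (0:ℝ) ≤ (c1:ℝ))]
      _ = |∑ A ∈ P, D A| := by rw [hid]
      _ ≤ ∑ A ∈ P, |D A| := Finset.abs_sum_le_sum_abs _ _
      _ ≤ P.card • (θK * S / 2) := Finset.sum_le_card_nsmul _ _ _ hbnd
      _ = (t.choose a : ℝ) * (θK * S / 2) := by
          rw [hP, Finset.card_powersetCard, nsmul_eq_mul]
  have hcid : t.choose a * (a * (t - a)) = (t*(t-1)) * c1 := choose_id' t a (by omega) ha1 hat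
  have hpar : t * (t-1) ≤ 4 * (a * (t - a)) := parity_bound t a (by omega) rfl
  have hc1pos : 0 < c1 := Nat.choose_pos (by omega)
  have hchoose_le : t.choose a ≤ 4 * c1 := by
    have hpos : 0 < a * (t - a) := by
      have : 1 ≤ t - a := by omega
      positivity
    have : t.choose a * (a * (t-a)) ≤ (4 * c1) * (a * (t-a)) := by
      rw [hcid]
      calc (t*(t-1)) * c1 ≤ (4 * (a * (t-a))) * c1 := Nat.mul_le_mul_right _ hpar
        _ = (4 * c1) * (a * (t-a)) := by ring
    exact Nat.le_of_mul_le_mul_right this hpos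
  have hfin : (c1:ℝ) * |Cr| ≤ (c1:ℝ) * (2 * θK * S) := by
    calc (c1:ℝ) * |Cr| ≤ (t.choose a : ℝ) * (θK * S / 2) := hchain
      _ ≤ (4 * c1 : ℝ) * (θK * S / 2) := by
          apply mul_le_mul_of_nonneg_right _ (by positivity)
          exact_mod_cast hchoose_le
      _ = (c1:ℝ) * (2 * θK * S) := by ring
  exact (mul_le_mul_iff_right₀ (by exact_mod_cast hc1pos : (0:ℝ) < (c1:ℝ))).mp hfin

end Stmt13Aux

open Stmt13Aux in
/-- For any matrix `Φ`, the restricted orthogonality constant `θ_K`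
and restricted isometry constants `δ_{2K}`, `δ_1` satisfy
`θ_K ≤ δ_{2K} ≤ 2θ_K + δ_1`. -/
theorem stmt_13 (M N K : ℕ) (hK : 1 ≤ K) (Φ : Matrix (Fin M) (Fin N) ℝ)
    (θK δ2K δ1 : ℝ)
    (hθ : IsLeast {θ : ℝ | ∀ x y : Fin N → ℝ,
        (∃ s : Finset (Fin N), s.card ≤ K ∧ ∀ i ∉ s, x i = 0) →
        (∃ s : Finset (Fin N), s.card ≤ K ∧ ∀ i ∉ s, y i = 0) →
        (∀ i, x i = 0 ∨ y i = 0) →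
        |∑ m, (∑ i, Φ m i * x i) * (∑ i, Φ m i * y i)| ≤
          θ * Real.sqrt (∑ i, x i ^ 2) * Real.sqrt (∑ i, y i ^ 2)} θK)
    (hδ2 : IsLeast {δ : ℝ | ∀ x : Fin N → ℝ,
        (∃ s : Finset (Fin N), s.card ≤ 2 * K ∧ ∀ i ∉ s, x i = 0) →
        (1 - δ) * (∑ i, x i ^ 2) ≤ ∑ m, (∑ i, Φ m i * x i) ^ 2 ∧
        ∑ m, (∑ i, Φ m i * x i) ^ 2 ≤ (1 + δ) * (∑ i, x i ^ 2)} δ2K)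
    (hδ1 : IsLeast {δ : ℝ | ∀ x : Fin N → ℝ,
        (∃ s : Finset (Fin N), s.card ≤ 1 ∧ ∀ i ∉ s, x i = 0) →
        (1 - δ) * (∑ i, x i ^ 2) ≤ ∑ m, (∑ i, Φ m i * x i) ^ 2 ∧
        ∑ m, (∑ i, Φ m i * x i) ^ 2 ≤ (1 + δ) * (∑ i, x i ^ 2)} δ1) :
    θK ≤ δ2K ∧ δ2K ≤ 2 * θK + δ1 := by
  obtain ⟨hθm, hθlb⟩ := hθ
  obtain ⟨hδ2m, hδ2lb⟩ := hδ2
  obtain ⟨hδ1m, hδ1lb⟩ := hδ1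
  simp only [Set.mem_setOf_eq] at hθm hδ2m hδ1m
  -- θK is nonnegative
  have hθ0 : 0 ≤ θK := by
    by_cases hN : 2 ≤ N
    · set i0 : Fin N := ⟨0, by omega⟩ with hi0
      set i1 : Fin N := ⟨1, by omega⟩ with hi1
      have h01 : i0 ≠ i1 := by simp [hi0, hi1, Fin.ext_iff]
      set e0 : Fin N → ℝ := fun i => if i = i0 then 1 else 0 with he0
      set e1 : Fin N → ℝ := fun i => if i = i1 then 1 else 0 with he1
      have hsum : ∀ b : Fin N, ∑ i, (if i = b then (1:ℝ) else 0) ^ 2 = 1 := by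
        intro b
        have h1 : ∀ j : Fin N, ((if j = b then (1:ℝ) else 0))^2 = if j = b then 1 else 0 :=
          fun j => by split <;> norm_num
        rw [Finset.sum_congr rfl fun j _ => h1 j, Finset.sum_ite_eq' Finset.univ b fun _ => (1:ℝ)]
        simp
      have hb := hθm e0 e1
        ⟨{i0}, by simpa using hK, fun i hi => if_neg (by simpa using hi)⟩
        ⟨{i1}, by simpa using hK, fun i hi => if_neg (by simpa using hi)⟩
        (fun i => by
          by_cases h : i = i0
          · right; rw [he1]; simp only [h]; exact if_neg h01
          · left; exact if_neg h)
      rw [he0, he1] at hb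
      rw [hsum i0, hsum i1] at hb
      simp only [Real.sqrt_one, mul_one] at hb
      exact le_trans (abs_nonneg _) hb
    · exfalso
      have hmem : ∀ θ : ℝ, ∀ x y : Fin N → ℝ,
          (∃ s : Finset (Fin N), s.card ≤ K ∧ ∀ i ∉ s, x i = 0) →
          (∃ s : Finset (Fin N), s.card ≤ K ∧ ∀ i ∉ s, y i = 0) →
          (∀ i, x i = 0 ∨ y i = 0) →
          |∑ m, (∑ i, Φ m i * x i) * (∑ i, Φ m i * y i)| ≤
            θ * Real.sqrt (∑ i, x i ^ 2) * Real.sqrt (∑ i, y i ^ 2) := by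
        intro θ x y _ _ hxy
        have hsub : Subsingleton (Fin N) := by
          rcases (by omega : N = 0 ∨ N = 1) with rfl | rfl
          · exact ⟨fun a => a.elim0⟩
          · exact ⟨fun a b => Subsingleton.elim a b⟩
        have hor : (∀ i, x i = 0) ∨ (∀ i, y i = 0) := by
          by_cases h0 : ∀ i, x i = 0
          · left; exact h0
          · right
            push_neg at h0
            obtain ⟨i0, hi0⟩ := h0
            intro j
            have : j = i0 := Subsingleton.elim _ _
            subst this
            rcases hxy j with h | h
            · exact absurd h hi0
            · exact h
        rcases hor with h | h
        · have hx0 : ∑ i, x i ^ 2 = 0 := by simp [h]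
          simp [h, hx0]
        · have hy0 : ∑ i, y i ^ 2 = 0 := by simp [h]
          simp [h, hy0]
      have := hθlb (show θK - 1 ∈ _ from hmem (θK - 1))
      linarith
  constructor
  · -- θK ≤ δ2K
    apply hθlb
    intro x y hx hy hxy
    obtain ⟨sx, hsxc, hsx⟩ := hx
    obtain ⟨sy, hsyc, hsy⟩ := hy
    have hSx : (0:ℝ) ≤ ∑ i, x i ^ 2 := Finset.sum_nonneg fun i _ => sq_nonneg _
    have hSy : (0:ℝ) ≤ ∑ i, y i ^ 2 := Finset.sum_nonneg fun i _ => sq_nonneg _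
    set a := Real.sqrt (∑ i, x i ^ 2) with ha
    set b := Real.sqrt (∑ i, y i ^ 2) with hb
    have ha0 : 0 ≤ a := Real.sqrt_nonneg _
    have hb0 : 0 ≤ b := Real.sqrt_nonneg _
    by_cases hax : a = 0
    · have hzero : ∑ i, x i ^ 2 = 0 := le_antisymm (Real.sqrt_eq_zero'.mp hax) hSx
      have hx0 : ∀ i, x i = 0 := fun i =>
        sq_eq_zero_iff.mp
          ((Finset.sum_eq_zero_iff_of_nonneg (fun i _ => sq_nonneg (x i))).mp hzero i
            (Finset.mem_univ i))
      simp [hx0, hax]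
    by_cases hbx : b = 0
    · have hzero : ∑ i, y i ^ 2 = 0 := le_antisymm (Real.sqrt_eq_zero'.mp hbx) hSy
      have hy0 : ∀ i, y i = 0 := fun i =>
        sq_eq_zero_iff.mp
          ((Finset.sum_eq_zero_iff_of_nonneg (fun i _ => sq_nonneg (y i))).mp hzero i
            (Finset.mem_univ i))
      simp [hy0, hbx]
    have hapos : 0 < a := lt_of_le_of_ne ha0 (Ne.symm hax)
    have hbpos : 0 < b := lt_of_le_of_ne hb0 (Ne.symm hbx)
    have ha2 : a ^ 2 = ∑ i, x i ^ 2 := Real.sq_sqrt hSx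
    have hb2 : b ^ 2 = ∑ i, y i ^ 2 := Real.sq_sqrt hSy
    set u : Fin N → ℝ := fun i => b * x i + a * y i with hu
    set v : Fin N → ℝ := fun i => b * x i - a * y i with hv
    have hus : ∃ s : Finset (Fin N), s.card ≤ 2*K ∧ ∀ i ∉ s, u i = 0 :=
      ⟨sx ∪ sy, le_trans (Finset.card_union_le _ _) (by omega), fun i hi => by
        rw [hu]
        simp only
        rw [hsx i (fun h => hi (Finset.mem_union_left _ h)),
          hsy i (fun h => hi (Finset.mem_union_right _ h))]
        ring⟩
    have hvs : ∃ s : Finset (Fin N), s.card ≤ 2*K ∧ ∀ i ∉ s, v i = 0 :=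
      ⟨sx ∪ sy, le_trans (Finset.card_union_le _ _) (by omega), fun i hi => by
        rw [hv]
        simp only
        rw [hsx i (fun h => hi (Finset.mem_union_left _ h)),
          hsy i (fun h => hi (Finset.mem_union_right _ h))]
        ring⟩
    have hxy0 : ∑ i, x i * y i = 0 :=
      Finset.sum_eq_zero fun i _ => by rcases hxy i with h | h <;> simp [h]
    have hSu : ∑ i, u i ^ 2 = 2*(a*b)^2 := by
      have e : ∀ i : Fin N, u i ^ 2 = b^2 * x i^2 + a^2 * y i^2 + (2*a*b) * (x i * y i) :=
        fun i => by rw [hu]; ring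
      rw [Finset.sum_congr rfl fun i _ => e i, Finset.sum_add_distrib, Finset.sum_add_distrib,
        ← Finset.mul_sum, ← Finset.mul_sum, ← Finset.mul_sum, hxy0, ← ha2, ← hb2]
      ring
    have hSv : ∑ i, v i ^ 2 = 2*(a*b)^2 := by
      have e : ∀ i : Fin N, v i ^ 2 = b^2 * x i^2 + a^2 * y i^2 - (2*a*b) * (x i * y i) :=
        fun i => by rw [hv]; ring
      rw [Finset.sum_congr rfl fun i _ => e i, Finset.sum_sub_distrib, Finset.sum_add_distrib,
        ← Finset.mul_sum, ← Finset.mul_sum, ← Finset.mul_sum, hxy0, ← ha2, ← hb2]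
      ring
    have hum : ∀ m, ∑ i, Φ m i * u i = b * (∑ i, Φ m i * x i) + a * (∑ i, Φ m i * y i) := by
      intro m
      rw [Finset.mul_sum, Finset.mul_sum, ← Finset.sum_add_distrib]
      exact Finset.sum_congr rfl fun i _ => by rw [hu]; ring
    have hvm : ∀ m, ∑ i, Φ m i * v i = b * (∑ i, Φ m i * x i) - a * (∑ i, Φ m i * y i) := by
      intro m
      rw [Finset.mul_sum, Finset.mul_sum, ← Finset.sum_sub_distrib]
      exact Finset.sum_congr rfl fun i _ => by rw [hv]; ring
    have key : (∑ m, (∑ i, Φ m i * u i)^2) - (∑ m, (∑ i, Φ m i * v i)^2)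
        = 4*a*b*(∑ m, (∑ i, Φ m i * x i) * (∑ i, Φ m i * y i)) := by
      rw [← Finset.sum_sub_distrib, Finset.mul_sum]
      refine Finset.sum_congr rfl fun m _ => ?_
      rw [hum m, hvm m]; ring
    obtain ⟨hu1, hu2⟩ := hδ2m u hus
    obtain ⟨hv1, hv2⟩ := hδ2m v hvs
    rw [hSu] at hu1 hu2
    rw [hSv] at hv1 hv2
    rw [abs_le]
    constructor
    · nlinarith [key, hu1, hv2, mul_pos hapos hbpos]
    · nlinarith [key, hu2, hv1, mul_pos hapos hbpos]
  · -- δ2K ≤ 2θK + δ1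
    apply hδ2lb
    intro x hx
    obtain ⟨s, hsc, hs⟩ := hx
    set S := ∑ i, x i ^ 2 with hSdef
    have hS0 : (0:ℝ) ≤ S := Finset.sum_nonneg fun i _ => sq_nonneg _
    set Q := ∑ m, (∑ i, Φ m i * x i) ^ 2 with hQdef
    set Dg := ∑ i ∈ s, x i * x i * G Φ i i with hDg
    set Cr := ∑ i ∈ s, ∑ j ∈ s.erase i, x i * x j * G Φ i j with hCr
    have hQ : Q = Dg + Cr := by
      have h0 : Q = ∑ i, ∑ j, x i * x j * G Φ i j := by
        rw [hQdef, ← bilin_eq]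
        exact Finset.sum_congr rfl fun m _ => sq _
      have h1 : ∑ i ∈ s, ∑ j ∈ s, x i * x j * G Φ i j = ∑ i, ∑ j, x i * x j * G Φ i j := by
        rw [Finset.sum_subset (Finset.subset_univ s)
          (fun i _ hi => Finset.sum_eq_zero fun j _ => by simp [hs i hi])]
        exact Finset.sum_congr rfl fun i _ =>
          Finset.sum_subset (Finset.subset_univ s) (fun j _ hj => by simp [hs j hj])
      rw [h0, ← h1, hDg, hCr, ← Finset.sum_add_distrib]
      exact Finset.sum_congr rfl fun i hi => (Finset.add_sum_erase s _ hi).symm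
    have hSs : ∑ i ∈ s, x i ^ 2 = S := by
      rw [hSdef]
      exact Finset.sum_subset (Finset.subset_univ s) (fun i _ hi => by simp [hs i hi])
    have hGd : ∀ i : Fin N, |G Φ i i - 1| ≤ δ1 := by
      intro i
      have hmem := hδ1m (fun j => if j = i then 1 else 0)
        ⟨{i}, by simp, fun j hj => if_neg (by simpa using hj)⟩
      have hsum1 : ∑ j, (if j = i then (1:ℝ) else 0) ^ 2 = 1 := by
        have h1 : ∀ j : Fin N, ((if j = i then (1:ℝ) else 0))^2 = if j = i then 1 else 0 :=
          fun j => by split <;> norm_num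
        rw [Finset.sum_congr rfl fun j _ => h1 j, Finset.sum_ite_eq' Finset.univ i fun _ => (1:ℝ)]
        simp
      have hsum2 : ∑ m, (∑ j, Φ m j * (if j = i then (1:ℝ) else 0))^2 = G Φ i i := by
        rw [G]
        refine Finset.sum_congr rfl fun m _ => ?_
        have : ∑ j, Φ m j * (if j = i then (1:ℝ) else 0) = Φ m i := by
          have h1 : ∀ j : Fin N, Φ m j * (if j = i then (1:ℝ) else 0)
              = if j = i then Φ m j else 0 := fun j => by split <;> simp
          rw [Finset.sum_congr rfl fun j _ => h1 j, Finset.sum_ite_eq' Finset.univ i fun j => Φ m j]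
          simp
        rw [this]; ring
      rw [hsum1, hsum2] at hmem
      obtain ⟨hl, hr⟩ := hmem
      rw [abs_le]
      constructor <;> linarith
    have hDgb : |Dg - S| ≤ δ1 * S := by
      have heq : Dg - S = ∑ i ∈ s, x i ^ 2 * (G Φ i i - 1) := by
        rw [← hSs, hDg, ← Finset.sum_sub_distrib]
        exact Finset.sum_congr rfl fun i _ => by ring
      rw [heq]
      calc |∑ i ∈ s, x i ^ 2 * (G Φ i i - 1)| ≤ ∑ i ∈ s, |x i ^ 2 * (G Φ i i - 1)| :=
            Finset.abs_sum_le_sum_abs _ _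
        _ ≤ ∑ i ∈ s, x i ^ 2 * δ1 := Finset.sum_le_sum fun i _ => by
            rw [abs_mul, abs_of_nonneg (sq_nonneg (x i))]
            exact mul_le_mul_of_nonneg_left (hGd i) (sq_nonneg _)
        _ = δ1 * S := by rw [← Finset.sum_mul, hSs, mul_comm]
    have hCrb : |Cr| ≤ 2 * θK * S :=
      cross_bound K hK Φ θK hθ0 hθm x s hsc hs
    rw [abs_le] at hDgb hCrb
    constructor
    · linarith [hQ, hDgb.1, hDgb.2, hCrb.1, hCrb.2]
    · linarith [hQ, hDgb.1, hDgb.2, hCrb.1, hCrb.2]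
end

section
/- Let G be the Paley graph of prime order p ≡ 1 (mod 4). Then the clique number satisfies ω(G) < √p. -/
/-- The Paley graph of prime order `p ≡ 1 (mod 4)` — the graph on
`ℤ_p` with `x ~ y` iff `x − y` is a nonzero quadratic residue — has clique number
strictly less than `√p`: every clique has fewer than `√p` vertices. -/
theorem stmt_16 (p : ℕ) (hp : p.Prime) (hp4 : p % 4 = 1)
    (G : SimpleGraph (ZMod p))
    (hG : ∀ x y : ZMod p, G.Adj x y ↔ x ≠ y ∧ IsSquare (x - y)) :
    ∀ t : Finset (ZMod p), G.IsClique (t : Set (ZMod p)) →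
      (t.card : ℝ) < Real.sqrt p := by
  haveI : Fact p.Prime := ⟨hp⟩
  intro t ht
  have hp2 : p ≠ 2 := by omega
  -- a nonsquare exists
  obtain ⟨n, hn⟩ : ∃ n : ZMod p, ¬ IsSquare n := by
    apply FiniteField.exists_nonsquare
    rw [ZMod.ringChar_zmod_n]
    exact_mod_cast hp2
  -- clique differences are squares
  have hsq : ∀ a ∈ t, ∀ b ∈ t, a ≠ b → IsSquare (a - b) := by
    intro a ha b hb hab
    exact ((hG a b).mp (ht (by exact_mod_cast ha) (by exact_mod_cast hb) hab)).2
  -- the map (a, b) ↦ a + n * b is injective on t × t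
  have hinj : Set.InjOn (fun q : ZMod p × ZMod p => q.1 + n * q.2)
      (t ×ˢ t : Finset (ZMod p × ZMod p)) := by
    rintro ⟨a, b⟩ hab ⟨a', b'⟩ hab' h
    simp only [Finset.coe_product, Set.mem_prod, Finset.mem_coe] at hab hab'
    simp only at h
    have key : a - a' = n * (b' - b) := by linear_combination h
    by_cases hbb : b = b'
    · have : a = a' := by
        have := key
        rw [hbb, sub_self, mul_zero, sub_eq_zero] at this
        exact this
      simp [this, hbb]
    · exfalso
      have haa : a ≠ a' := by
        intro hq
        rw [hq, sub_self, eq_comm, mul_eq_zero, sub_eq_zero] at key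
        rcases key with k1 | k2
        · rw [k1] at hn; exact hn (IsSquare.zero)
        · exact hbb k2.symm
      obtain ⟨c, hc⟩ := hsq a hab.1 a' hab'.1 haa
      obtain ⟨d, hd⟩ := hsq b' hab'.2 b hab.2 (Ne.symm hbb)
      have hd0 : d ≠ 0 := by
        intro h0; rw [h0, mul_zero, sub_eq_zero] at hd; exact hbb hd.symm
      apply hn
      refine ⟨c / d, ?_⟩
      have : n * (d * d) = c * c := by rw [← hd, ← key, hc]
      field_simp
      linear_combination this
  -- counting
  have hcard : t.card * t.card ≤ p := by
    have := Finset.card_le_card_of_injOn (fun q : ZMod p × ZMod p => q.1 + n * q.2)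
      (fun a _ => Finset.mem_univ _) hinj
    rwa [Finset.card_product, Finset.card_univ, ZMod.card] at this
  have hne : t.card * t.card ≠ p := by
    intro h
    have hd : t.card ∣ p := ⟨t.card, h.symm⟩
    rcases (Nat.Prime.eq_one_or_self_of_dvd hp _ hd) with h1 | h1 <;>
      rw [h1] at h <;> nlinarith [hp.two_le]
  have hlt : t.card * t.card < p := lt_of_le_of_ne hcard hne
  calc (t.card : ℝ) = Real.sqrt ((t.card : ℝ) * t.card) := by
        rw [Real.sqrt_mul_self (by positivity)]
    _ < Real.sqrt p := Real.sqrt_lt_sqrt (by positivity) (by exact_mod_cast hlt)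
end

section
/- Let Φ be an M×N unit-norm frame with N ≥ 2M whose columns sum to zero: ∑_{n=1}^N φ_n = 0. Then the average coherence satisfies ν ≤ μ/√M. -/
/-- If `Φ` is an `M × N` unit-norm frame with `N ≥ 2M` whose columns
sum to zero, then the average coherence satisfies `ν ≤ μ/√M`, where `μ` is the
worst-case coherence. -/
theorem stmt_18 (M N : ℕ) (hM : 1 ≤ M) (hN : 2 * M ≤ N)
    (Φ : Matrix (Fin M) (Fin N) ℂ)
    (hunit : ∀ n : Fin N, ∑ m : Fin M, ‖Φ m n‖ ^ 2 = 1)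
    (hzero : ∀ m : Fin M, ∑ n : Fin N, Φ m n = 0)
    (μ : ℝ)
    (hμ : IsGreatest {t : ℝ | ∃ i j : Fin N, i ≠ j ∧
        t = ‖∑ m : Fin M, (starRingEnd ℂ) (Φ m i) * Φ m j‖} μ) :
    ∀ i : Fin N,
      (1 / ((N : ℝ) - 1)) * ‖
          (∑ j ∈ Finset.univ.erase i, ∑ m : Fin M, (starRingEnd ℂ) (Φ m i) * Φ m j)‖
        ≤ μ / Real.sqrt M := by
  intro i
  have hMR : (1:ℝ) ≤ M := by exact_mod_cast hM
  have hNR : (2:ℝ) * M ≤ N := by exact_mod_cast hN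
  have hN1 : (1:ℝ) < N := by nlinarith
  set H := Φ.conjTranspose with hH
  set G := H * Φ with hGdef
  have hGapp : ∀ a b, G a b = ∑ m : Fin M, (starRingEnd ℂ) (Φ m a) * Φ m b := by
    intro a b
    simp [hGdef, Matrix.mul_apply, hH, Matrix.conjTranspose_apply]
  -- diagonal entries of G are 1
  have hdiag : ∀ a, G a a = 1 := by
    intro a
    rw [hGapp]
    have : ∑ m : Fin M, (starRingEnd ℂ) (Φ m a) * Φ m a
        = ((∑ m : Fin M, ‖Φ m a‖ ^ 2 : ℝ) : ℂ) := by
      push_cast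
      refine Finset.sum_congr rfl fun m _ => ?_
      rw [← Complex.ofReal_pow, Complex.sq_norm, Complex.normSq_eq_conj_mul_self]
    rw [this, hunit a]
    norm_num
  -- the row sums of G vanish
  have hrow : ∀ a, ∑ b : Fin N, G a b = 0 := by
    intro a
    simp only [hGapp]
    rw [Finset.sum_comm]
    simp only [← Finset.mul_sum]
    simp [hzero]
  -- the inner sum equals -1
  have hin : ∑ j ∈ Finset.univ.erase i, ∑ m : Fin M, (starRingEnd ℂ) (Φ m i) * Φ m j = -1 := by
    simp only [← hGapp]
    rw [Finset.sum_erase_eq_sub (Finset.mem_univ i), hrow, hdiag]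
    ring
  rw [hin]
  simp only [norm_neg, norm_one]
  -- μ is nonneg and bounds off-diagonal entries
  obtain ⟨a₀, b₀, hab₀, hμval⟩ := hμ.1
  have hμ0 : 0 ≤ μ := hμval ▸ norm_nonneg _
  have hμle : ∀ a b : Fin N, a ≠ b → ‖G a b‖ ≤ μ := by
    intro a b hab
    rw [hGapp]
    exact hμ.2 ⟨a, b, hab, rfl⟩
  -- G is Hermitian
  have hGherm : G.conjTranspose = G := by
    rw [hGdef, Matrix.conjTranspose_mul, hH, Matrix.conjTranspose_conjTranspose]
  have hGconj : ∀ a b, (starRingEnd ℂ) (G a b) = G b a := by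
    intro a b
    have := congrFun (congrFun hGherm b) a
    simpa [Matrix.conjTranspose_apply] using this
  set A := Φ * H with hAdef
  have hAherm : A.conjTranspose = A := by
    rw [hAdef, Matrix.conjTranspose_mul, hH, Matrix.conjTranspose_conjTranspose]
  have hAconj : ∀ a b, (starRingEnd ℂ) (A a b) = A b a := by
    intro a b
    have := congrFun (congrFun hAherm b) a
    simpa [Matrix.conjTranspose_apply] using this
  -- trace identity
  have htr : (G * G).trace = (A * A).trace := by
    have h1 : G * G = H * ((Φ * H) * Φ) := by
      rw [hGdef, Matrix.mul_assoc H Φ (H * Φ), ← Matrix.mul_assoc Φ H Φ]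
    have h2 : ((Φ * H) * Φ) * H = A * A := by
      rw [hAdef, Matrix.mul_assoc (Φ * H) Φ H]
    rw [h1, Matrix.trace_mul_comm, h2]
  -- express traces as sums of squared absolute values
  have habs : ∀ (z : ℂ), z * (starRingEnd ℂ) z = ((‖z‖ ^ 2 : ℝ) : ℂ) := by
    intro z
    rw [Complex.sq_norm, Complex.mul_conj]
  have hTG : (G * G).trace = ∑ a : Fin N, ∑ b : Fin N, ((‖G a b‖ ^ 2 : ℝ) : ℂ) := by
    simp only [Matrix.trace, Matrix.diag_apply, Matrix.mul_apply]
    refine Finset.sum_congr rfl fun a _ => Finset.sum_congr rfl fun b _ => ?_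
    rw [← hGconj a b, habs]
  have hTA : (A * A).trace = ∑ a : Fin M, ∑ b : Fin M, ((‖A a b‖ ^ 2 : ℝ) : ℂ) := by
    simp only [Matrix.trace, Matrix.diag_apply, Matrix.mul_apply]
    refine Finset.sum_congr rfl fun a _ => Finset.sum_congr rfl fun b _ => ?_
    rw [← hAconj a b, habs]
  have hTeq : (∑ a : Fin N, ∑ b : Fin N, ‖G a b‖ ^ 2)
      = ∑ a : Fin M, ∑ b : Fin M, ‖A a b‖ ^ 2 := by
    have h := htr
    rw [hTG, hTA] at h
    exact_mod_cast h
  -- diagonal of A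
  have hAdiag : ∀ m, A m m = ((∑ n : Fin N, ‖Φ m n‖ ^ 2 : ℝ) : ℂ) := by
    intro m
    rw [hAdef, Matrix.mul_apply]
    push_cast
    refine Finset.sum_congr rfl fun n _ => ?_
    rw [hH, Matrix.conjTranspose_apply,
      show star (Φ m n) = (starRingEnd ℂ) (Φ m n) from rfl, habs, Complex.ofReal_pow]
  set r : Fin M → ℝ := fun m => ∑ n : Fin N, ‖Φ m n‖ ^ 2 with hr
  have hrsum : ∑ m : Fin M, r m = N := by
    rw [hr]
    simp only
    rw [Finset.sum_comm]
    simp [hunit]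
  -- Cauchy-Schwarz: N^2 ≤ M * ∑ r^2
  have hCS : (N : ℝ) ^ 2 ≤ M * ∑ m : Fin M, r m ^ 2 := by
    have := sq_sum_le_card_mul_sum_sq (s := Finset.univ) (f := r)
    rw [hrsum] at this
    simpa using this
  -- ∑ r^2 ≤ total sum of |A|^2
  have hdiagA : ∑ m : Fin M, r m ^ 2 ≤ ∑ a : Fin M, ∑ b : Fin M, ‖A a b‖ ^ 2 := by
    refine Finset.sum_le_sum fun m _ => ?_
    have h1 : ‖A m m‖ ^ 2 = r m ^ 2 := by
      rw [hAdiag m, Complex.norm_real, Real.norm_eq_abs, sq_abs]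
    rw [← h1]
    exact Finset.single_le_sum (f := fun b => ‖A m b‖ ^ 2)
      (fun b _ => sq_nonneg _) (Finset.mem_univ m)
  -- upper bound on the G-sum
  have hGub : (∑ a : Fin N, ∑ b : Fin N, ‖G a b‖ ^ 2)
      ≤ N * (1 + (N - 1) * μ ^ 2) := by
    have h1 : ∀ a : Fin N, ∑ b : Fin N, ‖G a b‖ ^ 2 ≤ 1 + (N - 1) * μ ^ 2 := by
      intro a
      have hsplit := (Finset.add_sum_erase Finset.univ
        (fun b => ‖G a b‖ ^ 2) (Finset.mem_univ a)).symm
      rw [hsplit, hdiag a]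
      simp only [norm_one, one_pow]
      have hcard : (((Finset.univ : Finset (Fin N)).erase a).card : ℝ) = (N:ℝ) - 1 := by
        rw [Finset.card_erase_of_mem (Finset.mem_univ a), Finset.card_univ, Fintype.card_fin]
        have hN1' : 1 ≤ N := by omega
        push_cast [hN1']
        ring
      have h2 : ∑ b ∈ Finset.univ.erase a, ‖G a b‖ ^ 2 ≤ ((N:ℝ) - 1) * μ ^ 2 := by
        calc ∑ b ∈ Finset.univ.erase a, ‖G a b‖ ^ 2
            ≤ ∑ _b ∈ Finset.univ.erase a, μ ^ 2 := by
              refine Finset.sum_le_sum fun b hb => ?_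
              have hba : a ≠ b := fun h => (Finset.ne_of_mem_erase hb) h.symm
              exact pow_le_pow_left₀ (norm_nonneg _) (hμle a b hba) 2
          _ = (((Finset.univ : Finset (Fin N)).erase a).card : ℝ) * μ ^ 2 := by
              rw [Finset.sum_const, nsmul_eq_mul]
          _ = ((N:ℝ) - 1) * μ ^ 2 := by rw [hcard]
      linarith
    calc ∑ a : Fin N, ∑ b : Fin N, ‖G a b‖ ^ 2
        ≤ ∑ _a : Fin N, (1 + ((N:ℝ) - 1) * μ ^ 2) := Finset.sum_le_sum fun a _ => h1 a
      _ = N * (1 + (N - 1) * μ ^ 2) := by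
          rw [Finset.sum_const, Finset.card_univ, Fintype.card_fin, nsmul_eq_mul]
  -- Welch-type bound: N^2 ≤ M * N * (1 + (N-1) μ^2)
  have hWelch : (N:ℝ) ^ 2 ≤ M * (N * (1 + (N - 1) * μ ^ 2)) := by
    calc (N:ℝ)^2 ≤ M * ∑ m : Fin M, r m ^ 2 := hCS
      _ ≤ M * (∑ a : Fin M, ∑ b : Fin M, ‖A a b‖ ^ 2) := by
          apply mul_le_mul_of_nonneg_left hdiagA (by positivity)
      _ = M * (∑ a : Fin N, ∑ b : Fin N, ‖G a b‖ ^ 2) := by rw [hTeq]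
      _ ≤ M * (N * (1 + (N - 1) * μ ^ 2)) := by
          apply mul_le_mul_of_nonneg_left hGub (by positivity)
  -- derive M ≤ (μ (N-1))^2
  have hkey : (M : ℝ) ≤ (μ * ((N:ℝ) - 1)) ^ 2 := by
    have hNpos : (0:ℝ) < N := by linarith
    have h1 : (N:ℝ) - M ≤ M * ((N - 1) * μ ^ 2) := by
      nlinarith [hWelch, hNpos]
    nlinarith [h1, hMR, hNR, hμ0, sq_nonneg μ, sq_nonneg ((N:ℝ) - 1)]
  -- conclude
  have hsqrtM : (0:ℝ) < Real.sqrt M := Real.sqrt_pos.mpr (by linarith)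
  rw [mul_one, div_le_div_iff₀ (by linarith : (0:ℝ) < (N:ℝ) - 1) hsqrtM]
  have h4 : Real.sqrt M ≤ μ * ((N:ℝ) - 1) := by
    have := Real.sqrt_le_sqrt hkey
    rwa [Real.sqrt_sq (mul_nonneg hμ0 (by linarith))] at this
  linarith
end
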